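/- arXiv:1810.06708 — 3 statements merged into one kernel-verified Lean document; each statement's English description precedes it below -/
import Mathlib

section
/- For each one-sided sequence (s_0, s_1, s_2, …) of residue classes in F, there exists a (1/q)-Lipschitz function f^{(s_0s_1s_2…)} : R → R whose vertical curve V(f^{(s_0s_1…)}) = {(f(t),t) : t ∈ R} equals exactly the set of points (x,y) ∈ R² such that T^k(x,y) ∈ D_{1/q}(s_k) × R for all k ≥ 0. Moreover R² is the union of these vertical curves over all sequences. -/
open scoped Classical
open MeasureTheory Filter

noncomputable section

/-- A complete, locally compact non-Archimedean field with residue field of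
order `q`, absolute value normalized so that a uniformizer has norm `1/q`.
`reps` is a set of `q` coset representatives for the residue field: they cover
the ring of integers by discs of radius `1/q` and are pairwise at distance
`> 1/q`. -/
structure NAField (K : Type*) [NormedField K] where
  na : IsNonarchimedean (fun x : K => ‖x‖)
  complete : CompleteSpace K
  locCompact : LocallyCompactSpace K
  q : ℕ
  one_lt_q : 1 < q
  valGroup : ∀ x : K, x ≠ 0 → ∃ n : ℤ, ‖x‖ = (q : ℝ) ^ n
  exists_unif : ∃ ϖ : K, ‖ϖ‖ = (q : ℝ)⁻¹
  reps : Finset K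
  card_reps : reps.card = q
  norm_reps : ∀ s ∈ reps, ‖s‖ ≤ 1
  reps_cover : ∀ x : K, ‖x‖ ≤ 1 → ∃ s ∈ reps, ‖x - s‖ ≤ (q : ℝ)⁻¹
  reps_sep : ∀ s ∈ reps, ∀ t ∈ reps, s ≠ t → (q : ℝ)⁻¹ < ‖s - t‖

variable {K : Type*} [NormedField K]

/-- `f : R → R` is `(1/q)`-Lipschitz on the ring of integers. -/
def NAField.IsLip (F : NAField K) (f : K → K) : Prop :=
  (∀ t : K, ‖t‖ ≤ 1 → ‖f t‖ ≤ 1) ∧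
  ∀ t₁ t₂ : K, ‖t₁‖ ≤ 1 → ‖t₂‖ ≤ 1 → ‖f t₁ - f t₂‖ ≤ ((F.q : ℝ))⁻¹ * ‖t₁ - t₂‖

/-- The unit polydisc `R² ⊆ K²`. -/
def unitPoly (K : Type*) [NormedField K] : Set (K × K) := {p | ‖p.1‖ ≤ 1 ∧ ‖p.2‖ ≤ 1}

/-- Horizontal `δ`-neighborhood `H_δ(f) = {(t, f t + θ) : t ∈ R, |θ| ≤ δ}`. -/
def Hnbhd (f : K → K) (δ : ℝ) : Set (K × K) :=
  {p | ∃ t θ : K, ‖t‖ ≤ 1 ∧ ‖θ‖ ≤ δ ∧ p = (t, f t + θ)}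

/-- Vertical `δ`-neighborhood `V_δ(f) = {(f t + θ, t) : t ∈ R, |θ| ≤ δ}`. -/
def Vnbhd (f : K → K) (δ : ℝ) : Set (K × K) :=
  {p | ∃ t θ : K, ‖t‖ ≤ 1 ∧ ‖θ‖ ≤ δ ∧ p = (f t + θ, t)}

/-- The automorphism `T(x,y) = (a y + b (x^q - x), x)`. -/
def NAField.Tmap (F : NAField K) (a b : K) : K × K → K × K :=
  fun p => (a * p.2 + b * (p.1 ^ F.q - p.1), p.1)

/-- The inverse automorphism `T⁻¹(x,y) = (y, a⁻¹ (x - b (y^q - y)))`. -/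
def NAField.Tinv (F : NAField K) (a b : K) : K × K → K × K :=
  fun p => (p.2, a⁻¹ * (p.1 - b * (p.2 ^ F.q - p.2)))

/-- The attractor `A_T = ⋂_{n ≥ 1} Tⁿ(R²)`. -/
def NAField.Attractor (F : NAField K) (a b : K) : Set (K × K) :=
  ⋂ n ∈ {n : ℕ | 1 ≤ n}, (F.Tmap a b)^[n] '' unitPoly K

/-- The basin of attraction `B_T = ⋃_{n ≥ 1} T⁻ⁿ(R²)`. -/
def NAField.Basin (F : NAField K) (a b : K) : Set (K × K) :=
  ⋃ n ∈ {n : ℕ | 1 ≤ n}, (F.Tmap a b)^[n] ⁻¹' unitPoly K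

/-- `T^k` for `k : ℤ`. -/
def NAField.iterZ (F : NAField K) (a b : K) (k : ℤ) : K × K → K × K :=
  if 0 ≤ k then (F.Tmap a b)^[k.toNat] else (F.Tinv a b)^[(-k).toNat]

/-- The image under the conjugacy `ω` of the cylinder set of bisequences
agreeing with `s` on coordinates `-M, …, M`: points of the attractor whose
itinerary through the residue strips matches `s` on those coordinates. -/
def NAField.Cyl (F : NAField K) (a b : K) (s : ℤ → K) (M : ℕ) : Set (K × K) :=
  {p | p ∈ F.Attractor a b ∧
    ∀ k : ℤ, |k| ≤ (M : ℤ) → ‖(F.iterZ a b k p).1 - s k‖ ≤ ((F.q : ℝ))⁻¹}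
namespace S12
variable {K : Type*} [NormedField K]

lemma addle (F : NAField K) {x y : K} {c : ℝ} (hx : ‖x‖ ≤ c) (hy : ‖y‖ ≤ c) :
    ‖x + y‖ ≤ c := le_trans (F.na x y) (max_le hx hy)

lemma suble (F : NAField K) {x y : K} {c : ℝ} (hx : ‖x‖ ≤ c) (hy : ‖y‖ ≤ c) :
    ‖x - y‖ ≤ c := by
  rw [sub_eq_add_neg]
  exact addle F hx (by simpa using hy)

lemma qpos (F : NAField K) : (0:ℝ) < F.q := by
  have := F.one_lt_q; positivity

lemma hq1 (F : NAField K) : (1:ℝ) < F.q := by exact_mod_cast F.one_lt_q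

lemma qipos (F : NAField K) : (0:ℝ) < (F.q : ℝ)⁻¹ := by
  have := qpos F; positivity

lemma qilt1 (F : NAField K) : (F.q : ℝ)⁻¹ < 1 := by
  rw [inv_lt_one_iff₀]; right; exact hq1 F

lemma qile1 (F : NAField K) : (F.q : ℝ)⁻¹ ≤ 1 := (qilt1 F).le

lemma qmul (F : NAField K) : (F.q : ℝ) * (F.q : ℝ)⁻¹ = 1 :=
  mul_inv_cancel₀ (ne_of_gt (qpos F))

/-- norms `< 1` are `≤ 1/q` -/
lemma small_norm (F : NAField K) {x : K} (h : ‖x‖ < 1) : ‖x‖ ≤ (F.q : ℝ)⁻¹ := by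
  rcases eq_or_ne x 0 with rfl | hx
  · simp [le_of_lt (qipos F)]
  obtain ⟨n, hn⟩ := F.valGroup x hx
  rw [hn] at h ⊢
  have hq := hq1 F
  have hn0 : n < 0 := by
    by_contra hcon
    push_neg at hcon
    exact absurd h (not_lt.2 (one_le_zpow₀ hq.le hcon))
  have : n ≤ -1 := by omega
  calc (F.q:ℝ) ^ n ≤ (F.q:ℝ) ^ (-1 : ℤ) := zpow_le_zpow_right₀ hq.le this
    _ = (F.q : ℝ)⁻¹ := by simp

lemma norm_nat_le_one (F : NAField K) (n : ℕ) : ‖(n : K)‖ ≤ 1 := by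
  induction n with
  | zero => simp
  | succ m ih =>
    push_cast
    exact addle F ih (by simp)

/-- pick the representative of a coset -/
noncomputable def rho (F : NAField K) (x : K) : K :=
  if h : ‖x‖ ≤ 1 then (F.reps_cover x h).choose else 0

lemma rho_mem (F : NAField K) {x : K} (h : ‖x‖ ≤ 1) : rho F x ∈ F.reps := by
  rw [rho, dif_pos h]
  exact (F.reps_cover x h).choose_spec.1

lemma rho_close (F : NAField K) {x : K} (h : ‖x‖ ≤ 1) : ‖x - rho F x‖ ≤ (F.q : ℝ)⁻¹ := by
  rw [rho, dif_pos h]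
  exact (F.reps_cover x h).choose_spec.2

lemma reps_eq (F : NAField K) {s t : K} (hs : s ∈ F.reps) (ht : t ∈ F.reps)
    (h : ‖s - t‖ ≤ (F.q : ℝ)⁻¹) : s = t := by
  by_contra hne
  exact absurd h (not_le.2 (F.reps_sep s hs t ht hne))

lemma rho_eq_of_close (F : NAField K) {x y : K} (hx : ‖x‖ ≤ 1) (hy : ‖y‖ ≤ 1)
    (h : ‖x - y‖ ≤ (F.q : ℝ)⁻¹) : rho F x = rho F y := by
  refine reps_eq F (rho_mem F hx) (rho_mem F hy) ?_
  have : rho F x - rho F y = (rho F x - x) + ((x - y) + (y - rho F y)) := by ring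
  rw [this]
  refine addle F ?_ (addle F h (rho_close F hy))
  simpa [norm_sub_rev] using rho_close F hx

lemma rho_self (F : NAField K) {s : K} (hs : s ∈ F.reps) : rho F s = s := by
  refine reps_eq F (rho_mem F (F.norm_reps s hs)) hs ?_
  simpa [norm_sub_rev] using rho_close F (F.norm_reps s hs)

lemma rho_norm_le (F : NAField K) {x : K} (h : ‖x‖ ≤ 1) : ‖rho F x‖ ≤ 1 :=
  F.norm_reps _ (rho_mem F h)

end S12
namespace S12
variable {K : Type*} [NormedField K]

section AddGrp
variable (F : NAField K)

/-- close mod the maximal ideal -/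
def Cl (F : NAField K) (x y : K) : Prop := ‖x - y‖ ≤ (F.q : ℝ)⁻¹

lemma cl_refl (x : K) : Cl F x x := by
  unfold Cl; rw [sub_self, norm_zero]; exact (qipos F).le

lemma cl_symm {x y : K} (h : Cl F x y) : Cl F y x := by
  unfold Cl at *; rwa [norm_sub_rev]

lemma cl_trans {x y z : K} (h1 : Cl F x y) (h2 : Cl F y z) : Cl F x z := by
  unfold Cl at *
  have : x - z = (x - y) + (y - z) := by ring
  rw [this]; exact addle F h1 h2

lemma cl_rho {x : K} (h : ‖x‖ ≤ 1) : Cl F (rho F x) x := by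
  unfold Cl; simpa [norm_sub_rev] using rho_close F h

lemma cl_add {x y x' y' : K} (h1 : Cl F x x') (h2 : Cl F y y') : Cl F (x + y) (x' + y') := by
  unfold Cl at *
  have : x + y - (x' + y') = (x - x') + (y - y') := by ring
  rw [this]; exact addle F h1 h2

lemma rho_eq_cl {x y : K} (hx : ‖x‖ ≤ 1) (hy : ‖y‖ ≤ 1) (h : Cl F x y) :
    rho F x = rho F y := rho_eq_of_close F hx hy h

lemma rho_eq_rep {x s : K} (hx : ‖x‖ ≤ 1) (hs : s ∈ F.reps) (h : Cl F x s) :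
    rho F x = s :=
  reps_eq F (rho_mem F hx) hs (cl_trans F (cl_rho F hx) h)

/-- the subtype of representatives -/
abbrev Reps (F : NAField K) := {x : K // x ∈ F.reps}

noncomputable instance repsZero : Zero (Reps F) := ⟨⟨rho F 0, rho_mem F (by simp)⟩⟩
noncomputable instance repsAddOp : Add (Reps F) :=
  ⟨fun s t => ⟨rho F (s.1 + t.1), rho_mem F (addle F (F.norm_reps _ s.2) (F.norm_reps _ t.2))⟩⟩
noncomputable instance repsNeg : Neg (Reps F) :=
  ⟨fun s => ⟨rho F (-s.1), rho_mem F (by simpa using F.norm_reps _ s.2)⟩⟩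

noncomputable instance repsAdd : AddCommGroup (Reps F) where
  nsmul := nsmulRec
  zsmul := zsmulRec
  add_assoc s t u := by
    apply Subtype.ext
    show rho F (rho F (s.1 + t.1) + u.1) = rho F (s.1 + rho F (t.1 + u.1))
    have hs := F.norm_reps _ s.2
    have ht := F.norm_reps _ t.2
    have hu := F.norm_reps _ u.2
    have h1 : ‖rho F (s.1+t.1) + u.1‖ ≤ 1 := addle F (rho_norm_le F (addle F hs ht)) hu
    have h2 : ‖s.1 + rho F (t.1+u.1)‖ ≤ 1 := addle F hs (rho_norm_le F (addle F ht hu))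
    refine rho_eq_cl F h1 h2 ?_
    refine cl_trans F (cl_add F (cl_rho F (addle F hs ht)) (cl_refl F u.1)) ?_
    have : s.1 + t.1 + u.1 = s.1 + (t.1 + u.1) := by ring
    rw [this]
    exact cl_add F (cl_refl F s.1) (cl_symm F (cl_rho F (addle F ht hu)))
  zero_add s := by
    apply Subtype.ext
    show rho F (rho F 0 + s.1) = s.1
    have hs := F.norm_reps _ s.2
    have h1 : ‖rho F 0 + s.1‖ ≤ 1 := addle F (rho_norm_le F (by simp)) hs
    refine rho_eq_rep F h1 s.2 ?_
    have := cl_add F (cl_rho F (show ‖(0:K)‖ ≤ 1 by simp)) (cl_refl F s.1)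
    simpa using this
  add_zero s := by
    apply Subtype.ext
    show rho F (s.1 + rho F 0) = s.1
    have hs := F.norm_reps _ s.2
    have h1 : ‖s.1 + rho F 0‖ ≤ 1 := addle F hs (rho_norm_le F (by simp))
    refine rho_eq_rep F h1 s.2 ?_
    have := cl_add F (cl_refl F s.1) (cl_rho F (show ‖(0:K)‖ ≤ 1 by simp))
    simpa using this
  add_comm s t := by
    apply Subtype.ext
    show rho F (s.1 + t.1) = rho F (t.1 + s.1)
    rw [add_comm]
  neg_add_cancel s := by
    apply Subtype.ext
    show rho F (rho F (-s.1) + s.1) = rho F 0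
    have hs := F.norm_reps _ s.2
    have hns : ‖-s.1‖ ≤ 1 := by simpa using hs
    have h1 : ‖rho F (-s.1) + s.1‖ ≤ 1 := addle F (rho_norm_le F hns) hs
    refine rho_eq_cl F h1 (by simp) ?_
    have := cl_add F (cl_rho F hns) (cl_refl F s.1)
    simpa using this

lemma reps_nsmul (e : Reps F) (he : e.1 = rho F 1) :
    ∀ n : ℕ, (n • e : Reps F).1 = rho F (n : K) := by
  intro n
  induction n with
  | zero =>
    rw [zero_nsmul]
    show rho F 0 = rho F ((0:ℕ) : K)
    norm_num
  | succ m ih =>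
    have h2 : ((m+1) • e : Reps F) = m • e + e := by rw [add_nsmul, one_nsmul]
    rw [h2]
    show rho F ((m • e : Reps F).1 + e.1) = rho F (((m+1 : ℕ)) : K)
    rw [ih, he]
    have h1 : ‖rho F ((m:K)) + rho F 1‖ ≤ 1 :=
      addle F (rho_norm_le F (norm_nat_le_one F m)) (rho_norm_le F (by simp))
    refine rho_eq_cl F h1 (norm_nat_le_one F (m+1)) ?_
    have := cl_add F (cl_rho F (norm_nat_le_one F m)) (cl_rho F (show ‖(1:K)‖ ≤ 1 by simp))
    push_cast
    simpa using this

lemma norm_q_le : ‖(F.q : K)‖ ≤ (F.q : ℝ)⁻¹ := by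
  classical
  have hcard : Fintype.card (Reps F) = F.q := by
    rw [Fintype.card_coe, F.card_reps]
  have h0 : (F.q • (⟨rho F 1, rho_mem F (by simp)⟩ : Reps F)) = 0 := by
    rw [← hcard]; exact card_nsmul_eq_zero
  have h1 : rho F ((F.q : K)) = rho F 0 := by
    have h2 := congrArg Subtype.val h0
    rw [reps_nsmul F _ rfl] at h2
    exact h2
  have h3 : (F.q : K) = ((F.q : K) - rho F (F.q : K)) + rho F 0 := by rw [← h1]; ring
  rw [h3]
  refine addle F (rho_close F (norm_nat_le_one F _)) ?_
  have := cl_rho F (show ‖(0:K)‖ ≤ 1 by simp)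
  simpa [Cl] using this

end AddGrp
end S12
namespace S12
variable {K : Type*} [NormedField K]

section MulGrp
variable (F : NAField K)

lemma norm_one_of_cl {x y : K} (h : Cl F x y) (hy : ‖y‖ = 1) (hx : ‖x‖ ≤ 1) : ‖x‖ = 1 := by
  refine le_antisymm hx ?_
  have h2 : ‖y‖ ≤ max ‖y - x‖ ‖x‖ := by
    simpa using F.na (y - x) x
  rw [hy] at h2
  rcases max_cases ‖y - x‖ ‖x‖ with ⟨he, _⟩ | ⟨he, _⟩
  · rw [he] at h2
    have : ‖y - x‖ ≤ (F.q:ℝ)⁻¹ := (cl_symm F h)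
    linarith [qilt1 F]
  · rwa [he] at h2

lemma cl_mul {x y x' y' : K} (hx : ‖x‖ ≤ 1) (hy' : ‖y'‖ ≤ 1)
    (h1 : Cl F x x') (h2 : Cl F y y') : Cl F (x * y) (x' * y') := by
  unfold Cl at *
  have : x * y - x' * y' = x * (y - y') + (x - x') * y' := by ring
  rw [this]
  refine addle F ?_ ?_
  · rw [norm_mul]
    calc ‖x‖ * ‖y - y'‖ ≤ 1 * (F.q:ℝ)⁻¹ :=
      mul_le_mul hx h2 (norm_nonneg _) zero_le_one
    _ = _ := one_mul _
  · rw [norm_mul]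
    calc ‖x - x'‖ * ‖y'‖ ≤ (F.q:ℝ)⁻¹ * 1 :=
      mul_le_mul h1 hy' (norm_nonneg _) (qipos F).le
    _ = _ := mul_one _

lemma norm_z_lt (F : NAField K) : ‖rho F 0‖ ≤ (F.q:ℝ)⁻¹ := by
  have := cl_rho F (show ‖(0:K)‖ ≤ 1 by simp)
  simpa [Cl] using this

lemma norm_one_of_ne (F : NAField K) {s : K} (hs : s ∈ F.reps) (hne : s ≠ rho F 0) :
    ‖s‖ = 1 := by
  rcases lt_or_eq_of_le (F.norm_reps s hs) with h | h
  · exfalso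
    apply hne
    have h2 : Cl F s 0 := by
      unfold Cl; simpa using small_norm F h
    have := rho_eq_rep F (show ‖(0:K)‖ ≤ 1 by simp) hs (cl_symm F h2)
    exact this.symm ▸ rfl
  · exact h

/-- the norm-one representatives -/
def Gf (F : NAField K) : Finset K := F.reps.filter (fun s => ‖s‖ = 1)

lemma mem_Gf {s : K} : s ∈ Gf F ↔ s ∈ F.reps ∧ ‖s‖ = 1 := Finset.mem_filter

abbrev UReps (F : NAField K) := {x : K // x ∈ Gf F}

lemma Gf_eq : Gf F = F.reps.erase (rho F 0) := by
  ext s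
  rw [mem_Gf, Finset.mem_erase]
  constructor
  · rintro ⟨h1, h2⟩
    refine ⟨?_, h1⟩
    intro he
    rw [he] at h2
    have := norm_z_lt F
    rw [h2] at this
    linarith [qilt1 F]
  · rintro ⟨h1, h2⟩
    exact ⟨h2, norm_one_of_ne F h2 h1⟩

lemma card_Gf : (Gf F).card = F.q - 1 := by
  rw [Gf_eq, Finset.card_erase_of_mem (rho_mem F (by simp)), F.card_reps]

lemma norm_one_one : ‖(1:K)‖ = 1 := by simp

noncomputable instance urepsOne : One (UReps F) :=
  ⟨⟨rho F 1, (mem_Gf F).2 ⟨rho_mem F (by simp),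
    norm_one_of_cl F (cl_rho F (by simp)) (norm_one_one) (rho_norm_le F (by simp))⟩⟩⟩

lemma ureps_norm (s : UReps F) : ‖s.1‖ = 1 := ((mem_Gf F).1 s.2).2
lemma ureps_mem (s : UReps F) : s.1 ∈ F.reps := ((mem_Gf F).1 s.2).1
lemma ureps_le (s : UReps F) : ‖s.1‖ ≤ 1 := (ureps_norm F s).le

noncomputable instance urepsMul : Mul (UReps F) :=
  ⟨fun s t => ⟨rho F (s.1 * t.1), by
    have hst : ‖s.1 * t.1‖ = 1 := by rw [norm_mul, ureps_norm, ureps_norm, one_mul]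
    exact (mem_Gf F).2 ⟨rho_mem F (by rw [hst]),
      norm_one_of_cl F (cl_rho F (le_of_eq hst)) hst (rho_norm_le F (le_of_eq hst))⟩⟩⟩

noncomputable instance urepsInv : Inv (UReps F) :=
  ⟨fun s => ⟨rho F (s.1⁻¹), by
    have hne : s.1 ≠ 0 := by
      intro h0
      have := ureps_norm F s
      rw [h0] at this; simp at this
    have hinv : ‖s.1⁻¹‖ = 1 := by rw [norm_inv, ureps_norm, inv_one]
    exact (mem_Gf F).2 ⟨rho_mem F (le_of_eq hinv),
      norm_one_of_cl F (cl_rho F (le_of_eq hinv)) hinv (rho_norm_le F (le_of_eq hinv))⟩⟩⟩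

noncomputable instance urepsGroup : Group (UReps F) where
  npow := npowRec
  zpow := zpowRec
  div a b := a * b⁻¹
  mul_assoc s t u := by
    apply Subtype.ext
    show rho F (rho F (s.1 * t.1) * u.1) = rho F (s.1 * rho F (t.1 * u.1))
    have hs := ureps_le F s
    have ht := ureps_le F t
    have hu := ureps_le F u
    have hst : ‖s.1 * t.1‖ ≤ 1 := by rw [norm_mul]; exact mul_le_one₀ hs (norm_nonneg _) ht
    have htu : ‖t.1 * u.1‖ ≤ 1 := by rw [norm_mul]; exact mul_le_one₀ ht (norm_nonneg _) hu
    have h1 : ‖rho F (s.1*t.1) * u.1‖ ≤ 1 := by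
      rw [norm_mul]; exact mul_le_one₀ (rho_norm_le F hst) (norm_nonneg _) hu
    have h2 : ‖s.1 * rho F (t.1*u.1)‖ ≤ 1 := by
      rw [norm_mul]; exact mul_le_one₀ hs (norm_nonneg _) (rho_norm_le F htu)
    refine rho_eq_cl F h1 h2 ?_
    refine cl_trans F (cl_mul F (rho_norm_le F hst) hu (cl_rho F hst) (cl_refl F u.1)) ?_
    have : s.1 * t.1 * u.1 = s.1 * (t.1 * u.1) := by ring
    rw [this]
    exact cl_mul F hs (rho_norm_le F htu) (cl_refl F s.1) (cl_symm F (cl_rho F htu))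
  one_mul s := by
    apply Subtype.ext
    show rho F (rho F 1 * s.1) = s.1
    have hs := ureps_le F s
    have h1 : ‖rho F 1 * s.1‖ ≤ 1 := by
      rw [norm_mul]; exact mul_le_one₀ (rho_norm_le F (by simp)) (norm_nonneg _) hs
    refine rho_eq_rep F h1 (ureps_mem F s) ?_
    have := cl_mul F (rho_norm_le F (show ‖(1:K)‖ ≤ 1 by simp)) hs
      (cl_rho F (show ‖(1:K)‖ ≤ 1 by simp)) (cl_refl F s.1)
    simpa using this
  mul_one s := by
    apply Subtype.ext
    show rho F (s.1 * rho F 1) = s.1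
    have hs := ureps_le F s
    have h1 : ‖s.1 * rho F 1‖ ≤ 1 := by
      rw [norm_mul]; exact mul_le_one₀ hs (norm_nonneg _) (rho_norm_le F (by simp))
    refine rho_eq_rep F h1 (ureps_mem F s) ?_
    have := cl_mul F hs (show ‖(1:K)‖ ≤ 1 by simp)
      (cl_refl F s.1) (cl_rho F (show ‖(1:K)‖ ≤ 1 by simp))
    simpa using this
  inv_mul_cancel s := by
    apply Subtype.ext
    show rho F (rho F (s.1⁻¹) * s.1) = rho F 1
    have hs := ureps_le F s
    have hne : s.1 ≠ 0 := by
      intro h0; have := ureps_norm F s; rw [h0] at this; simp at this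
    have hinv : ‖s.1⁻¹‖ ≤ 1 := by rw [norm_inv, ureps_norm, inv_one]
    have h1 : ‖rho F (s.1⁻¹) * s.1‖ ≤ 1 := by
      rw [norm_mul]; exact mul_le_one₀ (rho_norm_le F hinv) (norm_nonneg _) hs
    refine rho_eq_cl F h1 (by simp) ?_
    have := cl_mul F (rho_norm_le F hinv) hs (cl_rho F hinv) (cl_refl F s.1)
    rwa [inv_mul_cancel₀ hne] at this

lemma ureps_pow (s : UReps F) : ∀ n : ℕ, ((s ^ n : UReps F)).1 = rho F (s.1 ^ n) := by
  intro n
  induction n with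
  | zero =>
    rw [pow_zero]
    show rho F 1 = rho F (s.1 ^ 0)
    rw [pow_zero]
  | succ m ih =>
    rw [pow_succ]
    show rho F ((s^m : UReps F).1 * s.1) = rho F (s.1 ^ (m+1))
    rw [ih]
    have hs := ureps_le F s
    have hsm : ‖s.1 ^ m‖ ≤ 1 := by
      rw [norm_pow]; exact pow_le_one₀ (norm_nonneg _) hs
    have h1 : ‖rho F (s.1^m) * s.1‖ ≤ 1 := by
      rw [norm_mul]; exact mul_le_one₀ (rho_norm_le F hsm) (norm_nonneg _) hs
    have h2 : ‖s.1 ^ (m+1)‖ ≤ 1 := by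
      rw [norm_pow]; exact pow_le_one₀ (norm_nonneg _) hs
    refine rho_eq_cl F h1 h2 ?_
    rw [pow_succ]
    exact cl_mul F (rho_norm_le F hsm) hs (cl_rho F hsm) (cl_refl F s.1)

lemma fermat (F : NAField K) {s : K} (hs : s ∈ F.reps) (h1 : ‖s‖ = 1) :
    ‖s ^ (F.q - 1) - 1‖ ≤ (F.q : ℝ)⁻¹ := by
  classical
  have hu : s ∈ Gf F := (mem_Gf F).2 ⟨hs, h1⟩
  set u : UReps F := ⟨s, hu⟩ with hud
  have hcard : Fintype.card (UReps F) = F.q - 1 := by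
    rw [Fintype.card_coe, card_Gf]
  have hp : u ^ (F.q - 1) = 1 := by rw [← hcard]; exact pow_card_eq_one
  have hval := congrArg Subtype.val hp
  rw [ureps_pow] at hval
  have hval' : rho F (s ^ (F.q - 1)) = rho F 1 := hval
  have hsm : ‖s ^ (F.q - 1)‖ ≤ 1 := by
    rw [norm_pow, h1, one_pow]
  have : s ^ (F.q-1) - 1 = (s ^ (F.q-1) - rho F (s ^ (F.q-1))) + (rho F 1 - 1) := by
    rw [hval']; ring
  rw [this]
  refine addle F (rho_close F hsm) ?_
  have := cl_rho F (show ‖(1:K)‖ ≤ 1 by simp)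
  simpa [Cl] using this

lemma frob_fix (F : NAField K) {s : K} (hs : s ∈ F.reps) :
    ‖s ^ F.q - s‖ ≤ (F.q : ℝ)⁻¹ := by
  rcases lt_or_eq_of_le (F.norm_reps s hs) with h | h
  · have h2 : ‖s‖ ≤ (F.q:ℝ)⁻¹ := small_norm F h
    refine suble F ?_ h2
    rw [norm_pow]
    calc ‖s‖ ^ F.q ≤ ((F.q:ℝ)⁻¹) ^ F.q :=
      pow_le_pow_left₀ (norm_nonneg _) h2 _
    _ ≤ ((F.q:ℝ)⁻¹) ^ 1 :=
      pow_le_pow_of_le_one (qipos F).le (qile1 F) (by have := F.one_lt_q; omega)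
    _ = (F.q:ℝ)⁻¹ := pow_one _
  · have hq1 : F.q - 1 + 1 = F.q := by have := F.one_lt_q; omega
    have : s ^ F.q - s = s * (s ^ (F.q - 1) - 1) := by
      rw [mul_sub, mul_one, ← pow_succ', hq1]
    rw [this, norm_mul, h, one_mul]
    exact fermat F hs h

end MulGrp
end S12
namespace S12
variable {K : Type*} [NormedField K]

section Key
variable (F : NAField K)

lemma cl_pow {x y : K} (hx : ‖x‖ ≤ 1) (hy : ‖y‖ ≤ 1) (h : Cl F x y) :
    ∀ n : ℕ, Cl F (x ^ n) (y ^ n) := by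
  intro n
  induction n with
  | zero => simpa using cl_refl F 1
  | succ m ih =>
    rw [pow_succ, pow_succ]
    exact cl_mul F (by rw [norm_pow]; exact pow_le_one₀ (norm_nonneg _) hx) hy ih h

lemma frob_fix_all' {x : K} (hx : ‖x‖ ≤ 1) : ‖x ^ F.q - x‖ ≤ (F.q : ℝ)⁻¹ := by
  set s := rho F x with hs
  have hsm : s ∈ F.reps := rho_mem F hx
  have hsl : ‖s‖ ≤ 1 := F.norm_reps s hsm
  have hcl : Cl F x s := cl_symm F (cl_rho F hx)
  have h1 : x ^ F.q - x = (x ^ F.q - s ^ F.q) + ((s ^ F.q - s) + (s - x)) := by ring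
  rw [h1]
  refine addle F (cl_pow F hx hsl hcl F.q) (addle F (frob_fix F hsm) ?_)
  simpa [Cl, norm_sub_rev] using hcl

include F in
lemma sum_le (n : ℕ) (f : ℕ → K) (c : ℝ) (hc : 0 ≤ c) (h : ∀ i < n, ‖f i‖ ≤ c) :
    ‖∑ i ∈ Finset.range n, f i‖ ≤ c := by
  induction n with
  | zero => simpa using hc
  | succ m ih =>
    rw [Finset.sum_range_succ]
    exact addle F (ih (fun i hi => h i (by omega))) (h m (by omega))

/-- the key contraction estimate for the Frobenius-type map -/
lemma key_contr {x y : K} (hx : ‖x‖ ≤ 1) (hy : ‖y‖ ≤ 1) (h : Cl F x y) :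
    ‖x ^ F.q - y ^ F.q‖ ≤ (F.q : ℝ)⁻¹ * ‖x - y‖ := by
  rw [← geom_sum₂_mul x y F.q, norm_mul]
  refine mul_le_mul_of_nonneg_right ?_ (norm_nonneg _)
  have hrw : (∑ i ∈ Finset.range F.q, x ^ i * y ^ (F.q - 1 - i)) =
      (∑ i ∈ Finset.range F.q, (x ^ i * y ^ (F.q - 1 - i) - y ^ (F.q - 1))) +
        (F.q : K) * y ^ (F.q - 1) := by
    rw [Finset.sum_sub_distrib, Finset.sum_const, Finset.card_range, nsmul_eq_mul]
    ring
  rw [hrw]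
  refine addle F (sum_le F _ _ _ (qipos F).le ?_) ?_
  · intro i hi
    have hiq : i + (F.q - 1 - i) = F.q - 1 := by omega
    have h2 : x ^ i * y ^ (F.q - 1 - i) - y ^ (F.q - 1) = (x ^ i - y ^ i) * y ^ (F.q - 1 - i) := by
      rw [sub_mul, ← pow_add, hiq]
    rw [h2, norm_mul]
    calc ‖x ^ i - y ^ i‖ * ‖y ^ (F.q-1-i)‖ ≤ (F.q:ℝ)⁻¹ * 1 := by
          refine mul_le_mul (cl_pow F hx hy h i) ?_ (norm_nonneg _) (qipos F).le
          rw [norm_pow]; exact pow_le_one₀ (norm_nonneg _) hy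
      _ = _ := mul_one _
  · rw [norm_mul]
    calc ‖(F.q:K)‖ * ‖y ^ (F.q-1)‖ ≤ (F.q:ℝ)⁻¹ * 1 := by
          refine mul_le_mul (norm_q_le F) ?_ (norm_nonneg _) (qipos F).le
          rw [norm_pow]; exact pow_le_one₀ (norm_nonneg _) hy
      _ = _ := mul_one _

variable {b : K}

lemma norm_b_inv (hb : ‖b‖ = (F.q : ℝ)) : ‖b⁻¹‖ = (F.q : ℝ)⁻¹ := by
  rw [norm_inv, hb]

lemma b_ne (hb : ‖b‖ = (F.q : ℝ)) : b ≠ 0 := by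
  intro h0
  rw [h0, norm_zero] at hb
  have := qpos F
  linarith

/-- the master rigidity estimate -/
lemma diff_bound (hb : ‖b‖ = (F.q : ℝ)) {x y : K} (hx1 : ‖x‖ ≤ 1) (hy1 : ‖y‖ ≤ 1)
    (hcl : Cl F x y) {c : ℝ} (hc : 0 ≤ c)
    (h : ‖b * (x ^ F.q - x) - b * (y ^ F.q - y)‖ ≤ max ‖x - y‖ c) :
    ‖x - y‖ ≤ (F.q : ℝ)⁻¹ * c := by
  have hq := qpos F
  have key : (F.q : ℝ) * ‖x - y‖ ≤ max ‖x - y‖ c := by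
    have hrw : b * (x - y) = b * (x ^ F.q - y ^ F.q) - (b * (x ^ F.q - x) - b * (y ^ F.q - y)) := by
      ring
    have h1 : ‖b * (x - y)‖ = (F.q : ℝ) * ‖x - y‖ := by rw [norm_mul, hb]
    rw [← h1, hrw]
    refine suble F ?_ h
    rw [norm_mul, hb]
    calc (F.q:ℝ) * ‖x ^ F.q - y ^ F.q‖ ≤ (F.q:ℝ) * ((F.q:ℝ)⁻¹ * ‖x - y‖) :=
          mul_le_mul_of_nonneg_left (key_contr F hx1 hy1 hcl) hq.le
      _ = ‖x - y‖ := by rw [← mul_assoc, qmul F, one_mul]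
      _ ≤ max ‖x - y‖ c := le_max_left _ _
  rcases max_cases ‖x - y‖ c with ⟨he, _⟩ | ⟨he, hle⟩
  · rw [he] at key
    have hxy0 : ‖x - y‖ = 0 := by nlinarith [norm_nonneg (x - y), hq1 F]
    rw [hxy0]
    positivity
  · rw [he] at key
    calc ‖x - y‖ = (F.q:ℝ)⁻¹ * ((F.q:ℝ) * ‖x - y‖) := by
          rw [← mul_assoc, inv_mul_cancel₀ hq.ne', one_mul]
      _ ≤ (F.q:ℝ)⁻¹ * c := mul_le_mul_of_nonneg_left key (qipos F).le

lemma fix_exists [CompleteSpace K] (D : Set K) (hD : IsClosed D)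
    (hne : D.Nonempty) (Θ : K → K) (hm : ∀ x ∈ D, Θ x ∈ D)
    (hl : ∀ x ∈ D, ∀ y ∈ D, dist (Θ x) (Θ y) ≤ (F.q : ℝ)⁻¹ * dist x y) : ∃ x ∈ D, Θ x = x := by
  haveI : CompleteSpace D := hD.completeSpace_coe
  haveI : Nonempty D := hne.to_subtype
  set c : NNReal := ⟨(F.q : ℝ)⁻¹, (qipos F).le⟩ with hcd
  set Θ' : D → D := fun x => ⟨Θ x, hm x x.2⟩ with hΘ'
  have hcw : ContractingWith c Θ' := by
    constructor
    · rw [← NNReal.coe_lt_coe]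
      exact qilt1 F
    · refine LipschitzWith.of_dist_le_mul fun x y => ?_
      exact hl x x.2 y y.2
  let z := ContractingWith.fixedPoint Θ' hcw
  refine ⟨z, z.2, ?_⟩
  have := ContractingWith.fixedPoint_isFixedPt hcw
  exact congrArg Subtype.val this

variable {a : K}

/-- solvability of the one-step equation -/
lemma solve [CompleteSpace K] (ha : ‖a‖ < 1) (hb : ‖b‖ = (F.q : ℝ))
    (g : K → K) (hgb : ∀ x, ‖x‖ ≤ 1 → ‖g x‖ ≤ 1)
    (hgl : ∀ x y, ‖x‖ ≤ 1 → ‖y‖ ≤ 1 → ‖g x - g y‖ ≤ ‖x - y‖)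
    {s : K} (hs : s ∈ F.reps) {t : K} (ht : ‖t‖ ≤ 1) :
    ∃ x, ‖x - s‖ ≤ (F.q : ℝ)⁻¹ ∧ a * t + b * (x ^ F.q - x) = g x := by
  have hsl := F.norm_reps s hs
  set D : Set K := Metric.closedBall s (F.q:ℝ)⁻¹ with hDd
  have hmemD : ∀ x, x ∈ D ↔ ‖x - s‖ ≤ (F.q:ℝ)⁻¹ := by
    intro x; rw [hDd, Metric.mem_closedBall, dist_eq_norm]
  have hD1 : ∀ x ∈ D, ‖x‖ ≤ 1 := by
    intro x hx
    have : x = (x - s) + s := by ring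
    rw [this]
    exact addle F (le_trans ((hmemD x).1 hx) (qile1 F)) hsl
  set Θ : K → K := fun x => x ^ F.q - b⁻¹ * (g x - a * t) with hΘd
  have hgat : ∀ x ∈ D, ‖g x - a * t‖ ≤ 1 := by
    intro x hx
    refine suble F (hgb x (hD1 x hx)) ?_
    rw [norm_mul]
    calc ‖a‖ * ‖t‖ ≤ 1 * 1 := mul_le_mul ha.le ht (norm_nonneg _) zero_le_one
      _ = 1 := one_mul 1
  have hmaps : ∀ x ∈ D, Θ x ∈ D := by
    intro x hx
    rw [hmemD]
    have hrw : Θ x - s = ((x ^ F.q - x) + (x - s)) - b⁻¹ * (g x - a * t) := by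
      rw [hΘd]; ring
    rw [hrw]
    refine suble F (addle F (frob_fix_all' F (hD1 x hx)) ((hmemD x).1 hx)) ?_
    rw [norm_mul, norm_b_inv F hb]
    calc (F.q:ℝ)⁻¹ * ‖g x - a*t‖ ≤ (F.q:ℝ)⁻¹ * 1 :=
        mul_le_mul_of_nonneg_left (hgat x hx) (qipos F).le
      _ = _ := mul_one _
  have hlip : ∀ x ∈ D, ∀ y ∈ D, dist (Θ x) (Θ y) ≤ (F.q : ℝ)⁻¹ * dist x y := by
    intro x hx y hy
    rw [dist_eq_norm, dist_eq_norm]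
    have hrw : Θ x - Θ y = (x ^ F.q - y ^ F.q) - b⁻¹ * (g x - g y) := by
      rw [hΘd]; ring
    rw [hrw]
    have hclxy : Cl F x y := by
      unfold Cl
      have : x - y = (x - s) - (y - s) := by ring
      rw [this]
      exact suble F ((hmemD x).1 hx) ((hmemD y).1 hy)
    refine suble F (key_contr F (hD1 x hx) (hD1 y hy) hclxy) ?_
    rw [norm_mul, norm_b_inv F hb]
    exact mul_le_mul_of_nonneg_left (hgl x y (hD1 x hx) (hD1 y hy)) (qipos F).le
  obtain ⟨x, hxD, hfix⟩ := fix_exists F D Metric.isClosed_closedBall ⟨s, by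
    rw [hmemD]; rw [sub_self, norm_zero]; exact (qipos F).le⟩ Θ hmaps hlip
  refine ⟨x, (hmemD x).1 hxD, ?_⟩
  have hbne := b_ne F hb
  have : x ^ F.q - b⁻¹ * (g x - a * t) = x := hfix
  field_simp at this
  linear_combination this

end Key
end S12
namespace S12
variable {K : Type*} [NormedField K]

section Gfun
variable (F : NAField K) (a b : K)

/-- finite-horizon approximations to the curve function -/
noncomputable def gfun : ℕ → (ℕ → K) → K → K
  | 0 => fun s _ => s 0
  | (N+1) => fun s t =>
      if h : ∃ x, ‖x - s 0‖ ≤ (F.q:ℝ)⁻¹ ∧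
          a * t + b * (x ^ F.q - x) = gfun N (fun k => s (k+1)) x
      then h.choose else 0

lemma add_le_max (F : NAField K) {u v : K} {c d : ℝ} (hu : ‖u‖ ≤ c) (hv : ‖v‖ ≤ d) :
    ‖u + v‖ ≤ max c d := le_trans (F.na u v) (max_le_max hu hv)

variable [CompleteSpace K] (ha : ‖a‖ < 1) (hb : ‖b‖ = (F.q : ℝ))

include ha hb in
lemma gfun_all : ∀ N : ℕ, ∀ s : ℕ → K, (∀ k, s k ∈ F.reps) →
    (∀ t : K, ‖t‖ ≤ 1 → ‖gfun F a b N s t - s 0‖ ≤ (F.q:ℝ)⁻¹) ∧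
    (∀ t t' : K, ‖t‖ ≤ 1 → ‖t'‖ ≤ 1 →
      ‖gfun F a b N s t - gfun F a b N s t'‖ ≤ (F.q:ℝ)⁻¹ * ‖t - t'‖) := by
  intro N
  induction N with
  | zero =>
    intro s hs
    constructor
    · intro t ht
      show ‖s 0 - s 0‖ ≤ _
      rw [sub_self, norm_zero]; exact (qipos F).le
    · intro t t' ht ht'
      show ‖s 0 - s 0‖ ≤ _
      rw [sub_self, norm_zero]; positivity
  | succ N ih =>
    intro s hs
    have hσs : ∀ k, (fun k => s (k+1)) k ∈ F.reps := fun k => hs (k+1)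
    obtain ⟨ihA, ihB⟩ := ih _ hσs
    have hgb : ∀ x, ‖x‖ ≤ 1 → ‖gfun F a b N (fun k => s (k+1)) x‖ ≤ 1 := by
      intro x hx
      have h2 : gfun F a b N (fun k => s (k+1)) x =
          (gfun F a b N (fun k => s (k+1)) x - s 1) + s 1 := by ring
      rw [h2]
      exact addle F (le_trans (ihA x hx) (qile1 F)) (F.norm_reps _ (hs 1))
    have hgl : ∀ x y, ‖x‖ ≤ 1 → ‖y‖ ≤ 1 →
        ‖gfun F a b N (fun k => s (k+1)) x - gfun F a b N (fun k => s (k+1)) y‖ ≤ ‖x - y‖ := by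
      intro x y hx hy
      refine le_trans (ihB x y hx hy) ?_
      calc (F.q:ℝ)⁻¹ * ‖x - y‖ ≤ 1 * ‖x - y‖ :=
        mul_le_mul_of_nonneg_right (qile1 F) (norm_nonneg _)
      _ = _ := one_mul _
    have hspec : ∀ t : K, ‖t‖ ≤ 1 → ‖gfun F a b (N+1) s t - s 0‖ ≤ (F.q:ℝ)⁻¹ ∧
        a * t + b * ((gfun F a b (N+1) s t) ^ F.q - gfun F a b (N+1) s t) =
          gfun F a b N (fun k => s (k+1)) (gfun F a b (N+1) s t) := by
      intro t ht
      have hex : ∃ x, ‖x - s 0‖ ≤ (F.q:ℝ)⁻¹ ∧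
          a * t + b * (x ^ F.q - x) = gfun F a b N (fun k => s (k+1)) x :=
        solve F ha hb _ hgb hgl (hs 0) ht
      have hrw : gfun F a b (N+1) s t = hex.choose := dif_pos hex
      rw [hrw]
      exact hex.choose_spec
    constructor
    · intro t ht
      exact (hspec t ht).1
    · intro t t' ht ht'
      set x := gfun F a b (N+1) s t with hx
      set y := gfun F a b (N+1) s t' with hy
      obtain ⟨hxc, hxe⟩ := hspec t ht
      obtain ⟨hyc, hye⟩ := hspec t' ht'
      have hs0 := F.norm_reps _ (hs 0)
      have hx1 : ‖x‖ ≤ 1 := by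
        have h2 : x = (x - s 0) + s 0 := by ring
        rw [h2]; exact addle F (le_trans hxc (qile1 F)) hs0
      have hy1 : ‖y‖ ≤ 1 := by
        have h2 : y = (y - s 0) + s 0 := by ring
        rw [h2]; exact addle F (le_trans hyc (qile1 F)) hs0
      have hcl : Cl F x y := by
        unfold Cl
        have h2 : x - y = (x - s 0) - (y - s 0) := by ring
        rw [h2]; exact suble F hxc hyc
      refine diff_bound F hb hx1 hy1 hcl (norm_nonneg _) ?_
      have h2 : b * (x ^ F.q - x) - b * (y ^ F.q - y) =
          (gfun F a b N (fun k => s (k+1)) x - gfun F a b N (fun k => s (k+1)) y) +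
            (-(a * (t - t'))) := by
        have e1 := hxe
        have e2 := hye
        linear_combination e1 - e2
      rw [h2]
      refine add_le_max F (hgl x y hx1 hy1) ?_
      rw [norm_neg, norm_mul]
      calc ‖a‖ * ‖t - t'‖ ≤ 1 * ‖t - t'‖ :=
        mul_le_mul_of_nonneg_right ha.le (norm_nonneg _)
      _ = _ := one_mul _

include ha hb in
lemma gfun_eq (N : ℕ) (s : ℕ → K) (hs : ∀ k, s k ∈ F.reps) (t : K) (ht : ‖t‖ ≤ 1) :
    a * t + b * ((gfun F a b (N+1) s t) ^ F.q - gfun F a b (N+1) s t) =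
      gfun F a b N (fun k => s (k+1)) (gfun F a b (N+1) s t) := by
  have hσs : ∀ k, (fun k => s (k+1)) k ∈ F.reps := fun k => hs (k+1)
  obtain ⟨ihA, ihB⟩ := gfun_all F a b ha hb N _ hσs
  have hgb : ∀ x, ‖x‖ ≤ 1 → ‖gfun F a b N (fun k => s (k+1)) x‖ ≤ 1 := by
    intro x hx
    have h2 : gfun F a b N (fun k => s (k+1)) x =
        (gfun F a b N (fun k => s (k+1)) x - s 1) + s 1 := by ring
    rw [h2]
    exact addle F (le_trans (ihA x hx) (qile1 F)) (F.norm_reps _ (hs 1))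
  have hgl : ∀ x y, ‖x‖ ≤ 1 → ‖y‖ ≤ 1 →
      ‖gfun F a b N (fun k => s (k+1)) x - gfun F a b N (fun k => s (k+1)) y‖ ≤ ‖x - y‖ := by
    intro x y hx hy
    refine le_trans (ihB x y hx hy) ?_
    calc (F.q:ℝ)⁻¹ * ‖x - y‖ ≤ 1 * ‖x - y‖ :=
      mul_le_mul_of_nonneg_right (qile1 F) (norm_nonneg _)
    _ = _ := one_mul _
  have hex : ∃ x, ‖x - s 0‖ ≤ (F.q:ℝ)⁻¹ ∧
      a * t + b * (x ^ F.q - x) = gfun F a b N (fun k => s (k+1)) x :=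
    solve F ha hb _ hgb hgl (hs 0) ht
  have hrw : gfun F a b (N+1) s t = hex.choose := dif_pos hex
  rw [hrw]
  exact hex.choose_spec.2

include ha hb in
lemma gfun_norm_le (N : ℕ) (s : ℕ → K) (hs : ∀ k, s k ∈ F.reps) (t : K) (ht : ‖t‖ ≤ 1) :
    ‖gfun F a b N s t‖ ≤ 1 := by
  have hA := (gfun_all F a b ha hb N s hs).1 t ht
  have h2 : gfun F a b N s t = (gfun F a b N s t - s 0) + s 0 := by ring
  rw [h2]
  exact addle F (le_trans hA (qile1 F)) (F.norm_reps _ (hs 0))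

lemma iter_fst_succ (p : K × K) (k : ℕ) :
    ((F.Tmap a b)^[k+1] p).1 =
      a * ((F.Tmap a b)^[k] p).2 +
        b * (((F.Tmap a b)^[k] p).1 ^ F.q - ((F.Tmap a b)^[k] p).1) := by
  rw [Function.iterate_succ_apply']
  rfl

lemma iter_snd_succ (p : K × K) (k : ℕ) :
    ((F.Tmap a b)^[k+1] p).2 = ((F.Tmap a b)^[k] p).1 := by
  rw [Function.iterate_succ_apply']
  rfl

include ha hb in
lemma gfun_orbit : ∀ N : ℕ, ∀ s : ℕ → K, (∀ k, s k ∈ F.reps) → ∀ t : K, ‖t‖ ≤ 1 →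
    ∀ k : ℕ, k ≤ N →
      ‖((F.Tmap a b)^[k] (gfun F a b N s t, t)).1 - s k‖ ≤ (F.q:ℝ)⁻¹ := by
  intro N
  induction N with
  | zero =>
    intro s hs t ht k hk
    interval_cases k
    simpa using (gfun_all F a b ha hb 0 s hs).1 t ht
  | succ N ih =>
    intro s hs t ht k hk
    cases k with
    | zero =>
      simpa using (gfun_all F a b ha hb (N+1) s hs).1 t ht
    | succ m =>
      have hm : m ≤ N := by omega
      set x := gfun F a b (N+1) s t with hxd
      have hx1 : ‖x‖ ≤ 1 := gfun_norm_le F a b ha hb (N+1) s hs t ht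
      have hstep : (F.Tmap a b) (x, t) = (gfun F a b N (fun k => s (k+1)) x, x) := by
        have he := gfun_eq F a b ha hb N s hs t ht
        show (a * t + b * (x ^ F.q - x), x) = _
        rw [he]
      have h2 : (F.Tmap a b)^[m+1] (x, t) =
          (F.Tmap a b)^[m] (gfun F a b N (fun k => s (k+1)) x, x) := by
        rw [Function.iterate_succ_apply, hstep]
      rw [h2]
      exact ih (fun k => s (k+1)) (fun k => hs (k+1)) x hx1 m hm

include ha hb in
lemma gfun_cauchy : ∀ N : ℕ, ∀ s : ℕ → K, (∀ k, s k ∈ F.reps) → ∀ t : K, ‖t‖ ≤ 1 →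
    ‖gfun F a b (N+1) s t - gfun F a b N s t‖ ≤ ((F.q:ℝ)⁻¹) ^ (N+1) := by
  intro N
  induction N with
  | zero =>
    intro s hs t ht
    have h2 : gfun F a b 0 s t = s 0 := rfl
    rw [h2, pow_one]
    exact (gfun_all F a b ha hb 1 s hs).1 t ht
  | succ N ih =>
    intro s hs t ht
    set x := gfun F a b (N+2) s t with hxd
    set y := gfun F a b (N+1) s t with hyd
    have hxc := (gfun_all F a b ha hb (N+2) s hs).1 t ht
    have hyc := (gfun_all F a b ha hb (N+1) s hs).1 t ht
    have hx1 : ‖x‖ ≤ 1 := gfun_norm_le F a b ha hb (N+2) s hs t ht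
    have hy1 : ‖y‖ ≤ 1 := gfun_norm_le F a b ha hb (N+1) s hs t ht
    have hcl : Cl F x y := by
      unfold Cl
      have h2 : x - y = (x - s 0) - (y - s 0) := by ring
      rw [h2]; exact suble F hxc hyc
    have hres : ‖x - y‖ ≤ (F.q:ℝ)⁻¹ * ((F.q:ℝ)⁻¹ ^ (N+1)) := by
      refine diff_bound F hb hx1 hy1 hcl (by positivity) ?_
      have e1 := gfun_eq F a b ha hb (N+1) s hs t ht
      have e2 := gfun_eq F a b ha hb N s hs t ht
      have h2 : b * (x ^ F.q - x) - b * (y ^ F.q - y) =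
          (gfun F a b (N+1) (fun k => s (k+1)) x - gfun F a b (N+1) (fun k => s (k+1)) y) +
            (gfun F a b (N+1) (fun k => s (k+1)) y - gfun F a b N (fun k => s (k+1)) y) := by
        linear_combination e1 - e2
      rw [h2]
      refine add_le_max F ?_ (ih (fun k => s (k+1)) (fun k => hs (k+1)) y hy1)
      have hB := (gfun_all F a b ha hb (N+1) (fun k => s (k+1)) (fun k => hs (k+1))).2
        x y hx1 hy1
      refine le_trans hB ?_
      calc (F.q:ℝ)⁻¹ * ‖x - y‖ ≤ 1 * ‖x - y‖ :=
        mul_le_mul_of_nonneg_right (qile1 F) (norm_nonneg _)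
      _ = _ := one_mul _
    calc ‖x - y‖ ≤ (F.q:ℝ)⁻¹ * ((F.q:ℝ)⁻¹ ^ (N+1)) := hres
      _ = ((F.q:ℝ)⁻¹) ^ (N+2) := by ring

end Gfun
end S12
namespace S12
variable {K : Type*} [NormedField K]

section Fseq
variable (F : NAField K) (a b : K)

/-- the limiting curve function -/
noncomputable def Fseq (s : ℕ → K) (t : K) : K :=
  limUnder Filter.atTop (fun N => gfun F a b N s t)

variable [CompleteSpace K] (ha : ‖a‖ < 1) (hb : ‖b‖ = (F.q : ℝ))

include ha hb in
lemma fseq_tendsto (s : ℕ → K) (hs : ∀ k, s k ∈ F.reps) (t : K) (ht : ‖t‖ ≤ 1) :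
    Filter.Tendsto (fun N => gfun F a b N s t) Filter.atTop (nhds (Fseq F a b s t)) := by
  have hc : CauchySeq (fun N => gfun F a b N s t) := by
    refine cauchySeq_of_le_geometric (F.q:ℝ)⁻¹ (F.q:ℝ)⁻¹ (qilt1 F) ?_
    intro n
    rw [dist_eq_norm, norm_sub_rev]
    calc ‖gfun F a b (n+1) s t - gfun F a b n s t‖ ≤ ((F.q:ℝ)⁻¹) ^ (n+1) :=
        gfun_cauchy F a b ha hb n s hs t ht
      _ = (F.q:ℝ)⁻¹ * ((F.q:ℝ)⁻¹) ^ n := by ring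
  exact hc.tendsto_limUnder

include ha hb in
lemma fseq_close (s : ℕ → K) (hs : ∀ k, s k ∈ F.reps) (t : K) (ht : ‖t‖ ≤ 1) :
    ‖Fseq F a b s t - s 0‖ ≤ (F.q:ℝ)⁻¹ := by
  have h1 : Filter.Tendsto (fun N => ‖gfun F a b N s t - s 0‖) Filter.atTop
      (nhds ‖Fseq F a b s t - s 0‖) :=
    ((fseq_tendsto F a b ha hb s hs t ht).sub_const (s 0)).norm
  refine le_of_tendsto h1 (Filter.Eventually.of_forall fun N => ?_)
  exact (gfun_all F a b ha hb N s hs).1 t ht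

include ha hb in
lemma fseq_norm_le (s : ℕ → K) (hs : ∀ k, s k ∈ F.reps) (t : K) (ht : ‖t‖ ≤ 1) :
    ‖Fseq F a b s t‖ ≤ 1 := by
  have h2 : Fseq F a b s t = (Fseq F a b s t - s 0) + s 0 := by ring
  rw [h2]
  exact addle F (le_trans (fseq_close F a b ha hb s hs t ht) (qile1 F)) (F.norm_reps _ (hs 0))

include ha hb in
lemma fseq_lip (s : ℕ → K) (hs : ∀ k, s k ∈ F.reps) (t t' : K) (ht : ‖t‖ ≤ 1)
    (ht' : ‖t'‖ ≤ 1) :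
    ‖Fseq F a b s t - Fseq F a b s t'‖ ≤ (F.q:ℝ)⁻¹ * ‖t - t'‖ := by
  have h1 : Filter.Tendsto (fun N => ‖gfun F a b N s t - gfun F a b N s t'‖) Filter.atTop
      (nhds ‖Fseq F a b s t - Fseq F a b s t'‖) :=
    ((fseq_tendsto F a b ha hb s hs t ht).sub (fseq_tendsto F a b ha hb s hs t' ht')).norm
  refine le_of_tendsto h1 (Filter.Eventually.of_forall fun N => ?_)
  exact (gfun_all F a b ha hb N s hs).2 t t' ht ht'

lemma tmap_continuous : Continuous (F.Tmap a b) := by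
  unfold NAField.Tmap
  fun_prop

include ha hb in
lemma fseq_orbit (s : ℕ → K) (hs : ∀ k, s k ∈ F.reps) (t : K) (ht : ‖t‖ ≤ 1) (k : ℕ) :
    ‖((F.Tmap a b)^[k] (Fseq F a b s t, t)).1 - s k‖ ≤ (F.q:ℝ)⁻¹ := by
  have hφ : Continuous (fun x : K => ((F.Tmap a b)^[k] (x, t)).1) := by
    refine continuous_fst.comp (((tmap_continuous F a b).iterate k).comp ?_)
    exact continuous_id.prodMk continuous_const
  have h1 : Filter.Tendsto (fun N => ‖((F.Tmap a b)^[k] (gfun F a b N s t, t)).1 - s k‖)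
      Filter.atTop (nhds ‖((F.Tmap a b)^[k] (Fseq F a b s t, t)).1 - s k‖) :=
    (((hφ.tendsto _).comp (fseq_tendsto F a b ha hb s hs t ht)).sub_const (s k)).norm
  refine le_of_tendsto h1 ?_
  rw [Filter.eventually_atTop]
  exact ⟨k, fun N hN => gfun_orbit F a b ha hb N s hs t ht k hN⟩

lemma dom_norm (F : NAField K) {A B : K} (h : ‖B‖ < ‖A‖) : ‖A + B‖ = ‖A‖ := by
  refine le_antisymm (le_trans (F.na A B) (max_le le_rfl h.le)) ?_
  have h2 : ‖A‖ ≤ max ‖A + B‖ ‖B‖ := by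
    simpa using F.na (A + B) (-B)
  rcases max_cases ‖A + B‖ ‖B‖ with ⟨he, _⟩ | ⟨he, _⟩
  · rwa [he] at h2
  · rw [he] at h2; linarith

include ha hb in
lemma orbit_unique (s : ℕ → K) (hs : ∀ k, s k ∈ F.reps) (t x y : K) (ht : ‖t‖ ≤ 1)
    (hx1 : ‖x‖ ≤ 1) (hy1 : ‖y‖ ≤ 1)
    (hxo : ∀ k, ‖((F.Tmap a b)^[k] (x, t)).1 - s k‖ ≤ (F.q:ℝ)⁻¹)
    (hyo : ∀ k, ‖((F.Tmap a b)^[k] (y, t)).1 - s k‖ ≤ (F.q:ℝ)⁻¹) : x = y := by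
  by_contra hne
  set u : ℕ → K := fun k => ((F.Tmap a b)^[k] (x, t)).1 with hud
  set v : ℕ → K := fun k => ((F.Tmap a b)^[k] (y, t)).1 with hvd
  set d : ℝ := ‖x - y‖ with hdd
  have hd0 : 0 < d := by
    rw [hdd, norm_pos_iff]
    exact sub_ne_zero.2 hne
  have hu1 : ∀ k, ‖u k‖ ≤ 1 := by
    intro k
    have h2 : u k = (u k - s k) + s k := by ring
    rw [h2]
    exact addle F (le_trans (hxo k) (qile1 F)) (F.norm_reps _ (hs k))
  have hv1 : ∀ k, ‖v k‖ ≤ 1 := by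
    intro k
    have h2 : v k = (v k - s k) + s k := by ring
    rw [h2]
    exact addle F (le_trans (hyo k) (qile1 F)) (F.norm_reps _ (hs k))
  have hcl : ∀ k, Cl F (u k) (v k) := by
    intro k
    unfold Cl
    have h2 : u k - v k = (u k - s k) - (v k - s k) := by ring
    rw [h2]
    exact suble F (hxo k) (hyo k)
  have hq0 : (0:ℝ) < F.q := qpos F
  -- the key growth estimate
  have grow : ∀ k, ‖u k - v k‖ = (F.q:ℝ) ^ k * d ∧
      ‖u (k+1) - v (k+1)‖ = (F.q:ℝ) ^ (k+1) * d := by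
    intro k
    induction k with
    | zero =>
      have h0 : u 0 - v 0 = x - y := by
        show ((F.Tmap a b)^[0] (x,t)).1 - ((F.Tmap a b)^[0] (y,t)).1 = x - y
        simp
      constructor
      · rw [h0]; simp [hdd]
      · have hu1e : u 1 = a * t + b * (x ^ F.q - x) := by
          show ((F.Tmap a b)^[1] (x,t)).1 = _
          simp [NAField.Tmap]
        have hv1e : v 1 = a * t + b * (y ^ F.q - y) := by
          show ((F.Tmap a b)^[1] (y,t)).1 = _
          simp [NAField.Tmap]
        have hrw : u 1 - v 1 = (-(b * (x - y))) + b * (x ^ F.q - y ^ F.q) := by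
          rw [hu1e, hv1e]; ring
        rw [hrw, dom_norm F, norm_neg, norm_mul, hb]
        · simp [hdd]
        · rw [norm_neg, norm_mul, norm_mul, hb]
          have hK : ‖x ^ F.q - y ^ F.q‖ ≤ (F.q:ℝ)⁻¹ * d := key_contr F hx1 hy1 (hcl 0) -- careful
          calc (F.q:ℝ) * ‖x ^ F.q - y ^ F.q‖ ≤ (F.q:ℝ) * ((F.q:ℝ)⁻¹ * d) :=
              mul_le_mul_of_nonneg_left hK hq0.le
            _ = d := by field_simp
            _ < (F.q:ℝ) * d := by nlinarith [hq1 F]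
    | succ k ih =>
      obtain ⟨ihk, ihk1⟩ := ih
      refine ⟨ihk1, ?_⟩
      have hue : u (k+2) = a * u k + b * (u (k+1) ^ F.q - u (k+1)) := by
        show ((F.Tmap a b)^[k+2] (x,t)).1 = _
        rw [iter_fst_succ F a b (x,t) (k+1), iter_snd_succ F a b (x,t) k]
      have hve : v (k+2) = a * v k + b * (v (k+1) ^ F.q - v (k+1)) := by
        show ((F.Tmap a b)^[k+2] (y,t)).1 = _
        rw [iter_fst_succ F a b (y,t) (k+1), iter_snd_succ F a b (y,t) k]
      have hrw : u (k+2) - v (k+2) =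
          (-(b * (u (k+1) - v (k+1)))) +
            (a * (u k - v k) + b * (u (k+1) ^ F.q - v (k+1) ^ F.q)) := by
        rw [hue, hve]; ring
      have hbig : ‖-(b * (u (k+1) - v (k+1)))‖ = (F.q:ℝ) ^ (k+2) * d := by
        rw [norm_neg, norm_mul, hb, ihk1]
        ring
      have hsmall : ‖a * (u k - v k) + b * (u (k+1) ^ F.q - v (k+1) ^ F.q)‖ <
          (F.q:ℝ) ^ (k+2) * d := by
        have hqk : (0:ℝ) < (F.q:ℝ) ^ (k+2) * d := by positivity
        have h1 : ‖a * (u k - v k)‖ < (F.q:ℝ) ^ (k+2) * d := by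
          rw [norm_mul, ihk]
          have hle : ‖a‖ * ((F.q:ℝ) ^ k * d) < 1 * ((F.q:ℝ) ^ k * d) := by
            have : (0:ℝ) < (F.q:ℝ) ^ k * d := by positivity
            exact mul_lt_mul_of_pos_right ha this
          have h3 : (F.q:ℝ) ^ k * d < (F.q:ℝ) ^ (k+2) * d := by
            have hp : (F.q:ℝ) ^ k < (F.q:ℝ) ^ (k+2) :=
              pow_lt_pow_right₀ (hq1 F) (by omega)
            exact mul_lt_mul_of_pos_right hp hd0
          linarith
        have h2 : ‖b * (u (k+1) ^ F.q - v (k+1) ^ F.q)‖ < (F.q:ℝ) ^ (k+2) * d := by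
          rw [norm_mul, hb]
          have hK := key_contr F (hu1 (k+1)) (hv1 (k+1)) (hcl (k+1))
          calc (F.q:ℝ) * ‖u (k+1) ^ F.q - v (k+1) ^ F.q‖ ≤
              (F.q:ℝ) * ((F.q:ℝ)⁻¹ * ‖u (k+1) - v (k+1)‖) :=
                mul_le_mul_of_nonneg_left hK hq0.le
            _ = ‖u (k+1) - v (k+1)‖ := by field_simp
            _ = (F.q:ℝ) ^ (k+1) * d := ihk1
            _ < (F.q:ℝ) ^ (k+2) * d := by
                have hp : (F.q:ℝ) ^ (k+1) < (F.q:ℝ) ^ (k+2) :=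
                  pow_lt_pow_right₀ (hq1 F) (by omega)
                exact mul_lt_mul_of_pos_right hp hd0
        calc ‖a * (u k - v k) + b * (u (k+1) ^ F.q - v (k+1) ^ F.q)‖ ≤
            max ‖a * (u k - v k)‖ ‖b * (u (k+1) ^ F.q - v (k+1) ^ F.q)‖ := F.na _ _
          _ < (F.q:ℝ) ^ (k+2) * d := max_lt h1 h2
      rw [hrw, dom_norm F (by rw [hbig]; exact hsmall), hbig]
  -- contradiction : the distances are bounded by q⁻¹ but grow without bound
  obtain ⟨k, hk⟩ : ∃ k : ℕ, 1 < (F.q:ℝ) ^ k * d := by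
    obtain ⟨k, hk⟩ := pow_unbounded_of_one_lt (1/d) (hq1 F)
    refine ⟨k, ?_⟩
    rw [div_lt_iff₀ hd0] at hk
    linarith
  have hle : ‖u k - v k‖ ≤ (F.q:ℝ)⁻¹ := hcl k
  rw [(grow k).1] at hle
  have := qilt1 F
  linarith

end Fseq
end S12
namespace S12
variable {K : Type*} [NormedField K]

lemma tmap_iter_mem (F : NAField K) (a b : K) (ha : ‖a‖ < 1) (hb : ‖b‖ = (F.q : ℝ))
    (p : K × K) (h1 : ‖p.1‖ ≤ 1) (h2 : ‖p.2‖ ≤ 1) (k : ℕ) :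
    ‖((F.Tmap a b)^[k] p).1‖ ≤ 1 ∧ ‖((F.Tmap a b)^[k] p).2‖ ≤ 1 := by
  induction k with
  | zero => exact ⟨h1, h2⟩
  | succ m ih =>
    obtain ⟨ih1, ih2⟩ := ih
    rw [Function.iterate_succ_apply']
    constructor
    · show ‖a * ((F.Tmap a b)^[m] p).2 +
        b * (((F.Tmap a b)^[m] p).1 ^ F.q - ((F.Tmap a b)^[m] p).1)‖ ≤ 1
      refine addle F ?_ ?_
      · rw [norm_mul]
        calc ‖a‖ * ‖((F.Tmap a b)^[m] p).2‖ ≤ 1 * 1 :=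
          mul_le_mul ha.le ih2 (norm_nonneg _) zero_le_one
        _ = 1 := one_mul 1
      · rw [norm_mul, hb]
        calc (F.q:ℝ) * ‖((F.Tmap a b)^[m] p).1 ^ F.q - ((F.Tmap a b)^[m] p).1‖ ≤
            (F.q:ℝ) * (F.q:ℝ)⁻¹ := mul_le_mul_of_nonneg_left (frob_fix_all' F ih1) (qpos F).le
          _ = 1 := qmul F
    · exact ih1

end S12
theorem stmt12 (F : NAField K) (a b : K) (ha0 : a ≠ 0) (ha : ‖a‖ < 1)
    (hb : ‖b‖ = (F.q : ℝ)) :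
    ∃ fseq : (ℕ → K) → K → K,
      (∀ s : ℕ → K, (∀ k, s k ∈ F.reps) →
        F.IsLip (fseq s) ∧
        {p : K × K | ‖p.2‖ ≤ 1 ∧ p.1 = fseq s p.2} =
          {p : K × K | ‖p.1‖ ≤ 1 ∧ ‖p.2‖ ≤ 1 ∧
            ∀ k : ℕ, ‖((F.Tmap a b)^[k] p).1 - s k‖ ≤ ((F.q : ℝ))⁻¹}) ∧
      ∀ p : K × K, ‖p.1‖ ≤ 1 → ‖p.2‖ ≤ 1 →
        ∃ s : ℕ → K, (∀ k, s k ∈ F.reps) ∧ p.1 = fseq s p.2 := by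
  classical
  haveI := F.complete
  have hmain : ∀ s : ℕ → K, (∀ k, s k ∈ F.reps) →
      F.IsLip (S12.Fseq F a b s) ∧
      {p : K × K | ‖p.2‖ ≤ 1 ∧ p.1 = S12.Fseq F a b s p.2} =
        {p : K × K | ‖p.1‖ ≤ 1 ∧ ‖p.2‖ ≤ 1 ∧
          ∀ k : ℕ, ‖((F.Tmap a b)^[k] p).1 - s k‖ ≤ ((F.q : ℝ))⁻¹} := by
    intro s hs
    constructor
    · exact ⟨fun t ht => S12.fseq_norm_le F a b ha hb s hs t ht,
        fun t₁ t₂ h1 h2 => S12.fseq_lip F a b ha hb s hs t₁ t₂ h1 h2⟩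
    · ext p
      simp only [Set.mem_setOf_eq]
      constructor
      · rintro ⟨ht, heq⟩
        refine ⟨by rw [heq]; exact S12.fseq_norm_le F a b ha hb s hs p.2 ht, ht, ?_⟩
        intro k
        have horb := S12.fseq_orbit F a b ha hb s hs p.2 ht k
        rw [← heq] at horb
        simpa using horb
      · rintro ⟨h1, h2, horb⟩
        refine ⟨h2, ?_⟩
        refine S12.orbit_unique F a b ha hb s hs p.2 p.1 (S12.Fseq F a b s p.2) h2 h1
          (S12.fseq_norm_le F a b ha hb s hs p.2 h2) ?_
          (fun k => S12.fseq_orbit F a b ha hb s hs p.2 h2 k)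
        intro k
        simpa using horb k
  refine ⟨S12.Fseq F a b, hmain, ?_⟩
  intro p h1 h2
  set s : ℕ → K := fun k => S12.rho F (((F.Tmap a b)^[k] p).1) with hsd
  have hs : ∀ k, s k ∈ F.reps := fun k =>
    S12.rho_mem F (S12.tmap_iter_mem F a b ha hb p h1 h2 k).1
  refine ⟨s, hs, ?_⟩
  have hmem : p ∈ {p : K × K | ‖p.1‖ ≤ 1 ∧ ‖p.2‖ ≤ 1 ∧
      ∀ k : ℕ, ‖((F.Tmap a b)^[k] p).1 - s k‖ ≤ ((F.q : ℝ))⁻¹} := by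
    refine ⟨h1, h2, fun k => ?_⟩
    exact S12.rho_close F (S12.tmap_iter_mem F a b ha hb p h1 h2 k).1
  rw [← (hmain s hs).2] at hmem
  exact hmem.2
end
end

section
/- For each backward sequence (…, s_{-3}, s_{-2}, s_{-1}) of residue classes in F, there exists a (1/q)-Lipschitz function g : R → R whose horizontal curve H(g) = {(t,g(t)) : t ∈ R} equals exactly the set of points (x,y) ∈ R² such that T^{k+1}(x,y) ∈ R × D_{1/q}(s_k) for all k ≤ -1. Moreover, the attractor A_T = ⋂_{n≥1} Tⁿ(R²) is the union of these horizontal curves over all backward sequences. -/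
open scoped Classical
open MeasureTheory Filter

noncomputable section

variable {K : Type*} [NormedField K]

namespace NAProof

variable {K : Type*} [NormedField K]

lemma one_lt_qR (F : NAField K) : (1:ℝ) < (F.q:ℝ) := by exact_mod_cast F.one_lt_q

lemma qR_pos (F : NAField K) : (0:ℝ) < (F.q:ℝ) := lt_trans one_pos (one_lt_qR F)

lemma invq_pos (F : NAField K) : (0:ℝ) < ((F.q:ℝ))⁻¹ := by
  have := qR_pos F; positivity

lemma invq_lt_one (F : NAField K) : ((F.q:ℝ))⁻¹ < 1 := by
  rw [inv_lt_one_iff₀]; right; exact one_lt_qR F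

lemma invq_le_one (F : NAField K) : ((F.q:ℝ))⁻¹ ≤ 1 := le_of_lt (invq_lt_one F)

lemma norm_le_invq (F : NAField K) {x : K} (h : ‖x‖ < 1) : ‖x‖ ≤ ((F.q:ℝ))⁻¹ := by
  by_cases hx : x = 0
  · rw [hx, norm_zero]; exact le_of_lt (invq_pos F)
  · obtain ⟨n, hn⟩ := F.valGroup x hx
    rw [hn] at h ⊢
    have hn0 : n < 0 := by
      by_contra hc
      push_neg at hc
      have : ((F.q:ℝ)) ^ (0:ℤ) ≤ (F.q:ℝ) ^ n := zpow_le_zpow_right₀ (le_of_lt (one_lt_qR F)) hc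
      rw [zpow_zero] at this; linarith
    calc (F.q:ℝ) ^ n ≤ (F.q:ℝ) ^ (-1:ℤ) :=
          zpow_le_zpow_right₀ (le_of_lt (one_lt_qR F)) (by omega)
      _ = ((F.q:ℝ))⁻¹ := by simp

def Oring (F : NAField K) : Subring K where
  carrier := {x | ‖x‖ ≤ 1}
  mul_mem' := by
    intro x y hx hy
    simp only [Set.mem_setOf_eq, norm_mul] at *
    nlinarith [norm_nonneg x, norm_nonneg y]
  one_mem' := by simp
  add_mem' := by
    intro x y hx hy
    exact le_trans (F.na x y) (max_le hx hy)
  zero_mem' := by simp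
  neg_mem' := by intro x hx; simpa using hx

def mId (F : NAField K) : Ideal (Oring F) where
  carrier := {x | ‖(x:K)‖ < 1}
  zero_mem' := by simp
  add_mem' := by
    intro x y hx hy
    exact lt_of_le_of_lt (F.na _ _) (max_lt hx hy)
  smul_mem' := by
    intro r x hx
    have hr : ‖(r:K)‖ ≤ 1 := r.2
    simp only [Set.mem_setOf_eq] at hx ⊢
    have : ‖((r • x : Oring F) : K)‖ = ‖(r:K)‖ * ‖(x:K)‖ := by
      rw [← norm_mul]; rfl
    rw [this]
    nlinarith [norm_nonneg (r:K), norm_nonneg (x:K)]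

lemma residue_facts (F : NAField K) :
    (∀ x : K, ‖x‖ ≤ 1 → ‖x ^ F.q - x‖ ≤ ((F.q:ℝ))⁻¹) ∧ ‖(F.q : K)‖ ≤ ((F.q:ℝ))⁻¹ := by
  classical
  set O := Oring F with hO
  set m := mId F with hm
  have repmem : ∀ s ∈ F.reps, ‖s‖ ≤ 1 := F.norm_reps
  let f : F.reps → O ⧸ m := fun s => Ideal.Quotient.mk m ⟨s.1, repmem s.1 s.2⟩
  have hsurj : Function.Surjective f := by
    intro y
    obtain ⟨z, rfl⟩ := Ideal.Quotient.mk_surjective y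
    obtain ⟨s, hs, hd⟩ := F.reps_cover z z.2
    refine ⟨⟨s, hs⟩, ?_⟩
    show Ideal.Quotient.mk m ⟨s, repmem s hs⟩ = Ideal.Quotient.mk m z
    rw [Ideal.Quotient.eq]
    show ‖((⟨s, repmem s hs⟩ - z : O) : K)‖ < 1
    have : ((⟨s, repmem s hs⟩ - z : O) : K) = s - (z:K) := rfl
    rw [this, ← norm_neg, neg_sub]
    exact lt_of_le_of_lt hd (invq_lt_one F)
  have hinj : Function.Injective f := by
    intro s t hst
    rw [Ideal.Quotient.eq] at hst
    have h1 : ‖(s.1 : K) - t.1‖ < 1 := hst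
    by_contra hne
    have hne' : (s.1:K) ≠ t.1 := fun h => hne (Subtype.ext h)
    exact absurd (norm_le_invq F h1)
      (not_le.mpr (F.reps_sep s.1 s.2 t.1 t.2 hne'))
  haveI : Fintype (O ⧸ m) := Fintype.ofBijective f ⟨hinj, hsurj⟩
  have hcard : Fintype.card (O ⧸ m) = F.q := by
    rw [← Fintype.card_of_bijective (⟨hinj, hsurj⟩ : Function.Bijective f),
      Fintype.card_coe, F.card_reps]
  have hfield : IsField (O ⧸ m) := by
    refine ⟨⟨0, 1, ?_⟩, mul_comm, ?_⟩
    · intro h01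
      have : (1 : O) ∈ m := by
        have := (Ideal.Quotient.eq_zero_iff_mem (I := m)).mp (map_one (Ideal.Quotient.mk m) ▸ h01.symm)
        exact this
      have h1 : ‖((1:O):K)‖ < 1 := this
      simp at h1
    · intro α hα
      obtain ⟨z, rfl⟩ := Ideal.Quotient.mk_surjective α
      have hz : z ∉ m := fun h => hα (Ideal.Quotient.eq_zero_iff_mem.mpr h)
      have hz1 : ‖(z:K)‖ = 1 := le_antisymm z.2 (not_lt.mp hz)
      have hz0 : (z:K) ≠ 0 := by
        intro h; rw [h] at hz1; simp at hz1
      refine ⟨Ideal.Quotient.mk m ⟨(z:K)⁻¹, by show ‖((z:K))⁻¹‖ ≤ 1; rw [norm_inv, hz1]; norm_num⟩, ?_⟩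
      rw [← map_mul, ← map_one (Ideal.Quotient.mk m)]
      congr 1
      ext
      exact mul_inv_cancel₀ hz0
  letI : Field (O ⧸ m) := hfield.toField
  constructor
  · intro x hx
    set z : O := ⟨x, hx⟩ with hz
    have : Ideal.Quotient.mk m z ^ F.q = Ideal.Quotient.mk m z := by
      rw [← hcard]; exact FiniteField.pow_card _
    rw [← map_pow, Ideal.Quotient.eq] at this
    have h1 : ‖((z ^ F.q - z : O) : K)‖ < 1 := this
    have h2 : ((z ^ F.q - z : O) : K) = x ^ F.q - x := by push_cast [hz]; ring
    rw [h2] at h1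
    exact norm_le_invq F h1
  · have h0 : ((Fintype.card (O ⧸ m) : ℕ) : O ⧸ m) = 0 := FiniteField.cast_card_eq_zero _
    rw [hcard] at h0
    have h1 : Ideal.Quotient.mk m ((F.q : ℕ) : O) = 0 := by
      rw [map_natCast]; exact h0
    have h2 : ((F.q : ℕ) : O) ∈ m := Ideal.Quotient.eq_zero_iff_mem.mp h1
    have h3 : ‖(((F.q : ℕ) : O) : K)‖ < 1 := h2
    have h4 : (((F.q : ℕ) : O) : K) = ((F.q : ℕ) : K) := by push_cast; ring
    rw [h4] at h3
    exact norm_le_invq F h3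

end NAProof
namespace NAProof

lemma na_two (F : NAField K) {x y : K} {c : ℝ} (hx : ‖x‖ ≤ c) (hy : ‖y‖ ≤ c) :
    ‖x + y‖ ≤ c := le_trans (F.na x y) (max_le hx hy)

lemma na_sub (F : NAField K) {x y : K} {c : ℝ} (hx : ‖x‖ ≤ c) (hy : ‖y‖ ≤ c) :
    ‖x - y‖ ≤ c := by
  rw [sub_eq_add_neg]
  exact na_two F hx (by simpa using hy)

lemma na_three (F : NAField K) {x y z : K} {c : ℝ} (hx : ‖x‖ ≤ c) (hy : ‖y‖ ≤ c)
    (hz : ‖z‖ ≤ c) : ‖x + y + z‖ ≤ c := na_two F (na_two F hx hy) hz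

lemma na_sum (F : NAField K) (n : ℕ) (f : ℕ → K) {C : ℝ} (hC : 0 ≤ C)
    (h : ∀ i < n, ‖f i‖ ≤ C) : ‖∑ i ∈ Finset.range n, f i‖ ≤ C := by
  induction n with
  | zero => simpa using hC
  | succ k ih =>
    rw [Finset.sum_range_succ]
    exact na_two F (ih fun i hi => h i (by omega)) (h k (by omega))

/-- `‖x^k - y^k‖ ≤ ‖x - y‖` for integral `x, y`. -/
lemma pow_sub_pow_le (F : NAField K) {x y : K} (hx : ‖x‖ ≤ 1) (hy : ‖y‖ ≤ 1) (k : ℕ) :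
    ‖x ^ k - y ^ k‖ ≤ ‖x - y‖ := by
  rw [← geom_sum₂_mul x y k, norm_mul]
  have h1 : ‖∑ i ∈ Finset.range k, x ^ i * y ^ (k - 1 - i)‖ ≤ 1 := by
    refine na_sum F k _ zero_le_one fun i _ => ?_
    rw [norm_mul, norm_pow, norm_pow]
    exact mul_le_one₀ (pow_le_one₀ (norm_nonneg x) hx) (by positivity)
      (pow_le_one₀ (norm_nonneg y) hy)
  nlinarith [norm_nonneg (x - y)]

/-- The key contraction estimate: `x ↦ x^q` contracts by `1/q` on residue discs. -/
lemma pow_q_contract (F : NAField K) {x y : K} (hx : ‖x‖ ≤ 1) (hy : ‖y‖ ≤ 1)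
    (hxy : ‖x - y‖ ≤ ((F.q:ℝ))⁻¹) :
    ‖x ^ F.q - y ^ F.q‖ ≤ ((F.q:ℝ))⁻¹ * ‖x - y‖ := by
  rw [← geom_sum₂_mul x y F.q, norm_mul]
  have hqi := invq_pos F
  have key : ‖∑ i ∈ Finset.range F.q, x ^ i * y ^ (F.q - 1 - i)‖ ≤ ((F.q:ℝ))⁻¹ := by
    have hsplit : ∑ i ∈ Finset.range F.q, x ^ i * y ^ (F.q - 1 - i) =
        (∑ i ∈ Finset.range F.q, (x ^ i * y ^ (F.q - 1 - i) - x ^ (F.q - 1)))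
          + (F.q : K) * x ^ (F.q - 1) := by
      rw [Finset.sum_sub_distrib]
      simp [Finset.sum_const, Finset.card_range, nsmul_eq_mul]
    rw [hsplit]
    refine na_two F ?_ ?_
    · refine na_sum F F.q _ (le_of_lt hqi) fun i hi => ?_
      have hiq : x ^ (F.q - 1) = x ^ i * x ^ (F.q - 1 - i) := by
        rw [← pow_add]; congr 1; omega
      rw [hiq, ← mul_sub, norm_mul]
      have h2 : ‖y ^ (F.q - 1 - i) - x ^ (F.q - 1 - i)‖ ≤ ((F.q:ℝ))⁻¹ := by
        refine le_trans (pow_sub_pow_le F hy hx _) ?_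
        rwa [← norm_neg, neg_sub] at hxy
      have h3 : ‖x ^ i‖ ≤ 1 := by
        rw [norm_pow]; exact pow_le_one₀ (norm_nonneg x) hx
      nlinarith [norm_nonneg (x ^ i), norm_nonneg (y ^ (F.q - 1 - i) - x ^ (F.q - 1 - i))]
    · rw [norm_mul]
      have h4 : ‖((F.q : ℕ) : K)‖ ≤ ((F.q:ℝ))⁻¹ := (residue_facts F).2
      have h5 : ‖x ^ (F.q - 1)‖ ≤ 1 := by
        rw [norm_pow]; exact pow_le_one₀ (norm_nonneg x) hx
      nlinarith [norm_nonneg ((F.q:ℕ):K), norm_nonneg (x ^ (F.q - 1))]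
  nlinarith [norm_nonneg (x - y), norm_nonneg (∑ i ∈ Finset.range F.q, x ^ i * y ^ (F.q - 1 - i))]

end NAProof
namespace NAProof

lemma Tinv_Tmap (F : NAField K) (a b : K) (ha0 : a ≠ 0) (p : K × K) :
    F.Tinv a b (F.Tmap a b p) = p := by
  simp only [NAField.Tmap, NAField.Tinv]
  refine Prod.ext rfl ?_
  field_simp
  ring

lemma Tmap_Tinv (F : NAField K) (a b : K) (ha0 : a ≠ 0) (p : K × K) :
    F.Tmap a b (F.Tinv a b p) = p := by
  simp only [NAField.Tmap, NAField.Tinv]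
  refine Prod.ext ?_ rfl
  field_simp
  ring

lemma mem_iter_image (F : NAField K) (a b : K) (ha0 : a ≠ 0) (n : ℕ) (U : Set (K × K))
    (p : K × K) : p ∈ (F.Tmap a b)^[n] '' U ↔ (F.Tinv a b)^[n] p ∈ U := by
  have hL : Function.LeftInverse (F.Tinv a b) (F.Tmap a b) := fun p => Tinv_Tmap F a b ha0 p
  have hR : Function.LeftInverse (F.Tmap a b) (F.Tinv a b) := fun p => Tmap_Tinv F a b ha0 p
  constructor
  · rintro ⟨x, hx, rfl⟩
    rwa [(hL.iterate n) x]
  · intro h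
    exact ⟨(F.Tinv a b)^[n] p, h, (hR.iterate n) p⟩

lemma Tmap_mem (F : NAField K) (a b : K) (ha : ‖a‖ < 1) (hb : ‖b‖ = (F.q:ℝ))
    {p : K × K} (hp : p ∈ unitPoly K) : F.Tmap a b p ∈ unitPoly K := by
  obtain ⟨h1, h2⟩ := hp
  refine ⟨?_, h1⟩
  show ‖a * p.2 + b * (p.1 ^ F.q - p.1)‖ ≤ 1
  refine na_two F ?_ ?_
  · rw [norm_mul]
    nlinarith [norm_nonneg a, norm_nonneg p.2]
  · rw [norm_mul, hb]
    have h3 : ‖p.1 ^ F.q - p.1‖ ≤ ((F.q:ℝ))⁻¹ := (residue_facts F).1 p.1 h1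
    have h4 : (F.q:ℝ) * ((F.q:ℝ))⁻¹ = 1 := mul_inv_cancel₀ (ne_of_gt (qR_pos F))
    nlinarith [qR_pos F]

lemma attractor_iff (F : NAField K) (a b : K) (ha0 : a ≠ 0) (ha : ‖a‖ < 1)
    (hb : ‖b‖ = (F.q:ℝ)) (p : K × K) :
    p ∈ F.Attractor a b ↔ ∀ n : ℕ, (F.Tinv a b)^[n] p ∈ unitPoly K := by
  constructor
  · intro h n
    have hmem : ∀ m : ℕ, 1 ≤ m → p ∈ (F.Tmap a b)^[m] '' unitPoly K := by
      intro m hm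
      have := Set.mem_iInter₂.mp h m hm
      exact this
    cases n with
    | zero =>
      obtain ⟨x, hx, rfl⟩ := hmem 1 le_rfl
      simpa using Tmap_mem F a b ha hb hx
    | succ k =>
      exact (mem_iter_image F a b ha0 (k+1) _ p).mp (hmem (k+1) (by omega))
  · intro h
    refine Set.mem_iInter₂.mpr fun n hn => ?_
    exact (mem_iter_image F a b ha0 n _ p).mpr (h n)

end NAProof
namespace NAProof

/-- predecessor sequence: `t, y 0, y 1, …` -/
def pre (t : K) (y : ℕ → K) : ℕ → K
  | 0 => t
  | k + 1 => y k

@[simp] lemma pre_zero (t : K) (y : ℕ → K) : pre t y 0 = t := rfl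
@[simp] lemma pre_succ (t : K) (y : ℕ → K) (k : ℕ) : pre t y (k + 1) = y k := rfl

/-- The contraction operator on itinerary perturbations. -/
def theta (F : NAField K) (a b : K) (s : ℕ → K) (t : K) (u : ℕ → K) (n : ℕ) : K :=
  (s n + u n) ^ F.q - s n -
    b⁻¹ * (pre t (fun k => s k + u k) n - a * (s (n + 1) + u (n + 1)))

lemma theta_bound (F : NAField K) (a b : K) (ha : ‖a‖ < 1) (hb : ‖b‖ = (F.q:ℝ))
    (s : ℕ → K) (hs1 : ∀ k, ‖s k‖ ≤ 1) (t : K) (ht : ‖t‖ ≤ 1) (u : ℕ → K)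
    (hu : ∀ n, ‖u n‖ ≤ ((F.q:ℝ))⁻¹) (n : ℕ) :
    ‖theta F a b s t u n‖ ≤ ((F.q:ℝ))⁻¹ := by
  have hqi := invq_pos F
  have hbinv : ‖b⁻¹‖ = ((F.q:ℝ))⁻¹ := by rw [norm_inv, hb]
  have hy : ∀ k, ‖s k + u k‖ ≤ 1 :=
    fun k => na_two F (hs1 k) (le_trans (hu k) (invq_le_one F))
  have hid : theta F a b s t u n =
      ((s n + u n) ^ F.q - (s n + u n)) + u n +
        (-(b⁻¹ * (pre t (fun k => s k + u k) n - a * (s (n + 1) + u (n + 1))))) := by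
    simp only [theta]; ring
  rw [hid]
  refine na_three F ((residue_facts F).1 _ (hy n)) (hu n) ?_
  rw [norm_neg, norm_mul, hbinv]
  have hP : ‖pre t (fun k => s k + u k) n - a * (s (n + 1) + u (n + 1))‖ ≤ 1 := by
    refine na_sub F ?_ ?_
    · cases n with
      | zero => simpa using ht
      | succ k => simpa using hy k
    · rw [norm_mul]
      nlinarith [norm_nonneg a, norm_nonneg (s (n+1) + u (n+1)), hy (n+1)]
  nlinarith [norm_nonneg (pre t (fun k => s k + u k) n - a * (s (n + 1) + u (n + 1)))]

lemma theta_contract (F : NAField K) (a b : K) (haq : ‖a‖ ≤ ((F.q:ℝ))⁻¹)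
    (hb : ‖b‖ = (F.q:ℝ)) (s : ℕ → K) (hs1 : ∀ k, ‖s k‖ ≤ 1) (t : K) (u v : ℕ → K)
    (hu : ∀ n, ‖u n‖ ≤ ((F.q:ℝ))⁻¹) (hv : ∀ n, ‖v n‖ ≤ ((F.q:ℝ))⁻¹)
    {D : ℝ} (hD : 0 ≤ D) (huv : ∀ n, ‖u n - v n‖ ≤ D) (n : ℕ) :
    ‖theta F a b s t u n - theta F a b s t v n‖ ≤ ((F.q:ℝ))⁻¹ * D := by
  have hqi := invq_pos F
  have hbinv : ‖b⁻¹‖ = ((F.q:ℝ))⁻¹ := by rw [norm_inv, hb]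
  have hy : ∀ k, ‖s k + u k‖ ≤ 1 :=
    fun k => na_two F (hs1 k) (le_trans (hu k) (invq_le_one F))
  have hy' : ∀ k, ‖s k + v k‖ ≤ 1 :=
    fun k => na_two F (hs1 k) (le_trans (hv k) (invq_le_one F))
  have hpre : pre t (fun k => s k + u k) n =
      pre t (fun k => s k + v k) n + pre 0 (fun k => u k - v k) n := by
    cases n with
    | zero => simp
    | succ k => simp only [pre_succ]; ring
  have hid : theta F a b s t u n - theta F a b s t v n =
      ((s n + u n) ^ F.q - (s n + v n) ^ F.q) +
        (-(b⁻¹ * pre 0 (fun k => u k - v k) n)) +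
        (b⁻¹ * a * (u (n + 1) - v (n + 1))) := by
    simp only [theta]; rw [hpre]; ring
  rw [hid]
  refine na_three F ?_ ?_ ?_
  · have hd : (s n + u n) - (s n + v n) = u n - v n := by ring
    have h1 : ‖(s n + u n) - (s n + v n)‖ ≤ ((F.q:ℝ))⁻¹ := by
      rw [hd]; exact na_sub F (hu n) (hv n)
    have h2 := pow_q_contract F (hy n) (hy' n) h1
    rw [hd] at h2
    refine le_trans h2 ?_
    nlinarith [norm_nonneg (u n - v n), huv n]
  · rw [norm_neg, norm_mul, hbinv]
    have : ‖pre 0 (fun k => u k - v k) n‖ ≤ D := by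
      cases n with
      | zero => simpa using hD
      | succ k => simpa using huv k
    nlinarith [norm_nonneg (pre 0 (fun k => u k - v k) n)]
  · rw [norm_mul, norm_mul, hbinv]
    have h3 : ‖a‖ * ‖u (n+1) - v (n+1)‖ ≤ D := by
      nlinarith [norm_nonneg a, norm_nonneg (u (n+1) - v (n+1)), huv (n+1),
        invq_le_one F]
    nlinarith [norm_nonneg a, norm_nonneg (u (n+1) - v (n+1))]

lemma theta_tdiff (F : NAField K) (a b : K) (hb : ‖b‖ = (F.q:ℝ)) (s : ℕ → K)
    (t t' : K) (u : ℕ → K) (n : ℕ) :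
    ‖theta F a b s t u n - theta F a b s t' u n‖ ≤ ((F.q:ℝ))⁻¹ * ‖t - t'‖ := by
  have hbinv : ‖b⁻¹‖ = ((F.q:ℝ))⁻¹ := by rw [norm_inv, hb]
  cases n with
  | zero =>
    have hid : theta F a b s t u 0 - theta F a b s t' u 0 = -(b⁻¹ * (t - t')) := by
      simp only [theta, pre_zero]; ring
    rw [hid, norm_neg, norm_mul, hbinv]
  | succ k =>
    have hid : theta F a b s t u (k+1) - theta F a b s t' u (k+1) = 0 := by
      simp only [theta, pre_succ]; ring
    rw [hid, norm_zero]
    have := invq_pos F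
    positivity

end NAProof
namespace NAProof

/-- A fixed point of `theta` produces a full backward orbit. -/
lemma orbit_of_fixed (F : NAField K) (a b : K) (ha0 : a ≠ 0) (hb0 : b ≠ 0)
    (s : ℕ → K) (t : K) (u : ℕ → K) (hfix : ∀ n, theta F a b s t u n = u n) :
    ∀ n, (F.Tinv a b)^[n] (t, s 0 + u 0) =
      (pre t (fun k => s k + u k) n, s n + u n) := by
  have hrec : ∀ n, pre t (fun k => s k + u k) n
      = a * (s (n+1) + u (n+1)) + b * ((s n + u n) ^ F.q - (s n + u n)) := by
    intro n
    have h1 := hfix n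
    simp only [theta] at h1
    have h2 : b⁻¹ * (pre t (fun k => s k + u k) n - a * (s (n+1) + u (n+1)))
        = (s n + u n) ^ F.q - (s n + u n) := by linear_combination -h1
    have h3 := congrArg (fun z => b * z) h2
    rw [← mul_assoc, mul_inv_cancel₀ hb0, one_mul] at h3
    linear_combination h3
  intro n
  induction n with
  | zero => simp [pre]
  | succ k ih =>
    rw [Function.iterate_succ_apply', ih]
    simp only [NAField.Tinv]
    refine Prod.ext ?_ ?_
    · simp [pre_succ]
    · show a⁻¹ * (pre t (fun k => s k + u k) k
          - b * ((s k + u k) ^ F.q - (s k + u k))) = s (k+1) + u (k+1)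
      rw [hrec k]
      field_simp
      ring

/-- Backward iterates written with `pre`. -/
lemma iter_eq (F : NAField K) (a b : K) (p : K × K) :
    ∀ n, (F.Tinv a b)^[n] p =
      (pre p.1 (fun k => ((F.Tinv a b)^[k] p).2) n, ((F.Tinv a b)^[n] p).2) := by
  intro n
  induction n with
  | zero => simp [pre]
  | succ k ih =>
    rw [Function.iterate_succ_apply']
    refine Prod.ext ?_ rfl
    · rw [ih]
      simp [NAField.Tinv, pre_succ]

/-- The backward orbit satisfies the recurrence. -/
lemma iter_rec (F : NAField K) (a b : K) (ha0 : a ≠ 0) (p : K × K) (n : ℕ) :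
    pre p.1 (fun k => ((F.Tinv a b)^[k] p).2) n
      = a * ((F.Tinv a b)^[n+1] p).2
        + b * (((F.Tinv a b)^[n] p).2 ^ F.q - ((F.Tinv a b)^[n] p).2) := by
  have h1 : (F.Tinv a b)^[n+1] p = F.Tinv a b ((F.Tinv a b)^[n] p) :=
    Function.iterate_succ_apply' _ _ _
  have h2 := congrArg Prod.snd h1
  have h3 := congrArg Prod.fst (iter_eq F a b p n)
  simp only at h2 h3
  -- h2 : Z (n+1) = a⁻¹ * ((Tinv^[n] p).1 - b * (Z n ^ q - Z n))
  simp only [NAField.Tinv] at h2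
  rw [h3] at h2
  field_simp at h2
  linear_combination -h2

end NAProof
namespace NAProof

lemma core (F : NAField K) (a b : K) (ha0 : a ≠ 0) (ha : ‖a‖ < 1)
    (hb : ‖b‖ = (F.q : ℝ)) (s : ℕ → K) (hs1 : ∀ k, ‖s k‖ ≤ 1) :
    ∃ g : K → K, F.IsLip g ∧
      {p : K × K | ‖p.1‖ ≤ 1 ∧ p.2 = g p.1} =
        {p : K × K | ‖p.1‖ ≤ 1 ∧ ‖p.2‖ ≤ 1 ∧
          ∀ n : ℕ, ‖((F.Tinv a b)^[n] p).1‖ ≤ 1 ∧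
            ‖((F.Tinv a b)^[n] p).2 - s n‖ ≤ ((F.q : ℝ))⁻¹} := by
  haveI := F.complete
  have hqi := invq_pos F
  have hqi1 := invq_le_one F
  have haq : ‖a‖ ≤ ((F.q:ℝ))⁻¹ := norm_le_invq F ha
  have hb0 : b ≠ 0 := by
    intro h; rw [h, norm_zero] at hb; have := qR_pos F; linarith
  -- the complete space of perturbation sequences
  set C : Set (BoundedContinuousFunction ℕ K) :=
    {u | ∀ n, ‖u n‖ ≤ ((F.q:ℝ))⁻¹} with hCdef
  have hCc : IsClosed C := by
    have hCeq : C = ⋂ n : ℕ,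
        {u : BoundedContinuousFunction ℕ K | ‖u n‖ ≤ ((F.q:ℝ))⁻¹} := by
      ext u; simp [hCdef, Set.mem_iInter]
    rw [hCeq]
    exact isClosed_iInter fun n => isClosed_le
      (Continuous.norm (continuous_eval_const n)) continuous_const
  haveI : CompleteSpace C := hCc.completeSpace_coe
  haveI : Nonempty C := ⟨⟨0, fun n => by simpa using le_of_lt hqi⟩⟩
  set τ : K → K := fun t => if ‖t‖ ≤ 1 then t else 0 with hτdef
  have hτ : ∀ t, ‖τ t‖ ≤ 1 := fun t => by
    by_cases h : ‖t‖ ≤ 1 <;> simp [hτdef, h]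
  have hτ1 : ∀ t, ‖t‖ ≤ 1 → τ t = t := fun t h => if_pos h
  have hmap : ∀ (t : K) (u : C),
      ∀ n, ‖theta F a b s (τ t) (u.1 : ℕ → K) n‖ ≤ ((F.q:ℝ))⁻¹ :=
    fun t u => theta_bound F a b ha hb s hs1 (τ t) (hτ t) _ u.2
  set Θ : K → C → C := fun t u =>
    ⟨BoundedContinuousFunction.mkOfBound
      ⟨fun n => theta F a b s (τ t) (u.1 : ℕ → K) n, continuous_of_discreteTopology⟩
      (2 * ((F.q:ℝ))⁻¹)
      (fun x y => by
        rw [dist_eq_norm]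
        refine le_trans (norm_sub_le _ _) ?_
        have hx := hmap t u x; have hy := hmap t u y
        simp only [ContinuousMap.coe_mk] at *
        linarith),
     fun n => hmap t u n⟩ with hΘdef
  have hΘapp : ∀ (t : K) (u : C) (n : ℕ),
      ((Θ t u).1 : ℕ → K) n = theta F a b s (τ t) (u.1 : ℕ → K) n := fun t u n => rfl
  set km : NNReal := ⟨((F.q:ℝ))⁻¹, le_of_lt hqi⟩ with hkm
  have hptdist : ∀ u v : C, ∀ n, ‖(u.1 : ℕ → K) n - (v.1 : ℕ → K) n‖ ≤ dist u v := by
    intro u v n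
    rw [← dist_eq_norm]
    refine le_trans (BoundedContinuousFunction.dist_coe_le_dist n) ?_
    rw [Subtype.dist_eq]
  have hcontr : ∀ t : K, ContractingWith km (Θ t) := by
    intro t
    constructor
    · exact_mod_cast invq_lt_one F
    · refine LipschitzWith.of_dist_le_mul fun u v => ?_
      rw [Subtype.dist_eq]
      have hnn : (0:ℝ) ≤ (km : ℝ) * dist u v := by positivity
      refine (BoundedContinuousFunction.dist_le hnn).mpr fun n => ?_
      rw [dist_eq_norm]
      show ‖theta F a b s (τ t) (u.1 : ℕ → K) n - theta F a b s (τ t) (v.1 : ℕ → K) n‖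
        ≤ (km : ℝ) * dist u v
      exact theta_contract F a b haq hb s hs1 (τ t) _ _ u.2 v.2 dist_nonneg
        (hptdist u v) n
  set fixU : K → C := fun t => ContractingWith.fixedPoint (Θ t) (hcontr t) with hfixdef
  have hfixeq : ∀ t n,
      theta F a b s (τ t) ((fixU t).1 : ℕ → K) n = ((fixU t).1 : ℕ → K) n := by
    intro t n
    have h1 : Θ t (fixU t) = fixU t := ContractingWith.fixedPoint_isFixedPt (hcontr t)
    exact congrArg (fun w : C => (w.1 : ℕ → K) n) h1
  have hfixb : ∀ t n, ‖((fixU t).1 : ℕ → K) n‖ ≤ ((F.q:ℝ))⁻¹ := fun t => (fixU t).2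
  -- Lipschitz dependence on t
  have hlip : ∀ t t', ‖t‖ ≤ 1 → ‖t'‖ ≤ 1 →
      dist (fixU t) (fixU t') ≤ ((F.q:ℝ))⁻¹ * ‖t - t'‖ := by
    intro t t' ht ht'
    set d := dist (fixU t) (fixU t') with hd
    have hdnn : 0 ≤ d := dist_nonneg
    have hM : (0:ℝ) ≤ max (((F.q:ℝ))⁻¹ * d) (((F.q:ℝ))⁻¹ * ‖t - t'‖) :=
      le_max_of_le_left (by positivity)
    have key : d ≤ max (((F.q:ℝ))⁻¹ * d) (((F.q:ℝ))⁻¹ * ‖t - t'‖) := by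
      rw [hd, Subtype.dist_eq]
      refine (BoundedContinuousFunction.dist_le hM).mpr fun n => ?_
      rw [dist_eq_norm]
      have e1 : ((fixU t).1 : ℕ → K) n - ((fixU t').1 : ℕ → K) n =
          (theta F a b s (τ t) ((fixU t).1 : ℕ → K) n
            - theta F a b s (τ t) ((fixU t').1 : ℕ → K) n)
          + (theta F a b s (τ t) ((fixU t').1 : ℕ → K) n
            - theta F a b s (τ t') ((fixU t').1 : ℕ → K) n) := by
        rw [hfixeq t n, hfixeq t' n]; ring
      rw [e1]
      refine le_trans (F.na _ _) (max_le_max ?_ ?_)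
      · exact theta_contract F a b haq hb s hs1 (τ t) _ _ (hfixb t) (hfixb t')
          hdnn (hptdist (fixU t) (fixU t')) n
      · have h6 : ‖τ t - τ t'‖ = ‖t - t'‖ := by rw [hτ1 t ht, hτ1 t' ht']
        have h5 := theta_tdiff F a b hb s (τ t) (τ t') ((fixU t').1 : ℕ → K) n
        rw [h6] at h5
        exact h5
    by_cases hcmp : ((F.q:ℝ))⁻¹ * d ≤ ((F.q:ℝ))⁻¹ * ‖t - t'‖
    · rw [max_eq_right hcmp] at key; exact key
    · push_neg at hcmp
      rw [max_eq_left (le_of_lt hcmp)] at key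
      have hd0 : d = 0 := by nlinarith [invq_lt_one F]
      rw [hd0]; positivity
  -- the function
  refine ⟨fun t => s 0 + ((fixU t).1 : ℕ → K) 0, ⟨?_, ?_⟩, ?_⟩
  · intro t ht
    exact na_two F (hs1 0) (le_trans (hfixb t 0) hqi1)
  · intro t₁ t₂ h₁ h₂
    have e2 : s 0 + ((fixU t₁).1 : ℕ → K) 0 - (s 0 + ((fixU t₂).1 : ℕ → K) 0)
        = ((fixU t₁).1 : ℕ → K) 0 - ((fixU t₂).1 : ℕ → K) 0 := by ring
    rw [e2]
    exact le_trans (hptdist (fixU t₁) (fixU t₂) 0) (hlip t₁ t₂ h₁ h₂)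
  · ext p
    simp only [Set.mem_setOf_eq]
    constructor
    · rintro ⟨hp1, hp2⟩
      have hfixc : ∀ n, theta F a b s p.1 (((fixU p.1).1 : ℕ → K)) n
          = ((fixU p.1).1 : ℕ → K) n := by
        intro n
        have := hfixeq p.1 n
        rwa [hτ1 p.1 hp1] at this
      have horb := orbit_of_fixed F a b ha0 hb0 s p.1 _ hfixc
      have hpp : p = (p.1, s 0 + ((fixU p.1).1 : ℕ → K) 0) := Prod.ext rfl hp2
      have hY1 : ∀ k, ‖s k + ((fixU p.1).1 : ℕ → K) k‖ ≤ 1 :=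
        fun k => na_two F (hs1 k) (le_trans (hfixb p.1 k) hqi1)
      refine ⟨hp1, by rw [hp2]; exact hY1 0, fun n => ?_⟩
      rw [hpp, horb n]
      constructor
      · cases n with
        | zero => simpa using hp1
        | succ k => simpa using hY1 k
      · have e3 : s n + ((fixU p.1).1 : ℕ → K) n - s n
            = ((fixU p.1).1 : ℕ → K) n := by ring
        simpa [e3] using hfixb p.1 n
    · rintro ⟨hp1, hp2, hcond⟩
      -- backward direction: the orbit perturbations form a fixed point
      set u : ℕ → K := fun n => ((F.Tinv a b)^[n] p).2 - s n with hudef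
      have hu : ∀ n, ‖u n‖ ≤ ((F.q:ℝ))⁻¹ := fun n => (hcond n).2
      have hsu : (fun k => s k + u k) = fun k => ((F.Tinv a b)^[k] p).2 := by
        funext k; simp [hudef]
      have hfixc : ∀ n, theta F a b s p.1 u n = u n := by
        intro n
        simp only [theta, hudef, hsu]
        have e4 : s n + (((F.Tinv a b)^[n] p).2 - s n) = ((F.Tinv a b)^[n] p).2 := by
          ring
        have e5 : (fun k => s k + (((F.Tinv a b)^[k] p).2 - s k))
            = fun k => ((F.Tinv a b)^[k] p).2 := by
          funext k; ring
        rw [e4, e5, iter_rec F a b ha0 p n]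
        field_simp
        ring
      have hbd : ∀ x y : ℕ, dist (u x) (u y) ≤ 2 * ((F.q:ℝ))⁻¹ := by
        intro x y
        rw [dist_eq_norm]
        refine le_trans (norm_sub_le _ _) ?_
        have := hu x; have := hu y; linarith
      set U : C := ⟨BoundedContinuousFunction.mkOfBound
        ⟨u, continuous_of_discreteTopology⟩ (2 * ((F.q:ℝ))⁻¹) hbd, fun n => hu n⟩
        with hUdef
      have hUfix : Θ p.1 U = U := by
        refine Subtype.ext ?_
        refine BoundedContinuousFunction.ext fun n => ?_
        show theta F a b s (τ p.1) u n = u n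
        rw [hτ1 p.1 hp1]
        exact hfixc n
      have hUeq : U = fixU p.1 := ContractingWith.fixedPoint_unique (hcontr p.1) hUfix
      refine ⟨hp1, ?_⟩
      have : ((fixU p.1).1 : ℕ → K) 0 = u 0 := by rw [← hUeq]; rfl
      rw [this, hudef]
      show p.2 = s 0 + (((F.Tinv a b)^[0] p).2 - s 0)
      simp

end NAProof
theorem stmt13 (F : NAField K) (a b : K) (ha0 : a ≠ 0) (ha : ‖a‖ < 1)
    (hb : ‖b‖ = (F.q : ℝ)) :
    ∃ gseq : (ℕ → K) → K → K,
      (∀ s : ℕ → K, (∀ k, s k ∈ F.reps) →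
        F.IsLip (gseq s) ∧
        {p : K × K | ‖p.1‖ ≤ 1 ∧ p.2 = gseq s p.1} =
          {p : K × K | ‖p.1‖ ≤ 1 ∧ ‖p.2‖ ≤ 1 ∧
            ∀ n : ℕ, ‖((F.Tinv a b)^[n] p).1‖ ≤ 1 ∧
              ‖((F.Tinv a b)^[n] p).2 - s n‖ ≤ ((F.q : ℝ))⁻¹}) ∧
      F.Attractor a b =
        ⋃ (s : ℕ → K) (_ : ∀ k, s k ∈ F.reps),
          {p : K × K | ‖p.1‖ ≤ 1 ∧ p.2 = gseq s p.1} := by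
  classical
  have hcore : ∀ s : ℕ → K, ∃ g : K → K, (∀ k, s k ∈ F.reps) →
      (F.IsLip g ∧
        {p : K × K | ‖p.1‖ ≤ 1 ∧ p.2 = g p.1} =
          {p : K × K | ‖p.1‖ ≤ 1 ∧ ‖p.2‖ ≤ 1 ∧
            ∀ n : ℕ, ‖((F.Tinv a b)^[n] p).1‖ ≤ 1 ∧
              ‖((F.Tinv a b)^[n] p).2 - s n‖ ≤ ((F.q : ℝ))⁻¹}) := by
    intro s
    by_cases hs : ∀ k, ‖s k‖ ≤ 1
    · obtain ⟨g, hg⟩ := NAProof.core F a b ha0 ha hb s hs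
      exact ⟨g, fun _ => hg⟩
    · refine ⟨0, fun hmem => absurd (fun k => F.norm_reps _ (hmem k)) hs⟩
  choose gseq hgseq using hcore
  refine ⟨gseq, fun s hs => hgseq s hs, ?_⟩
  ext p
  simp only [Set.mem_iUnion, Set.mem_setOf_eq]
  constructor
  · intro hp
    have horb := (NAProof.attractor_iff F a b ha0 ha hb p).mp hp
    have hchoice : ∀ n : ℕ, ∃ r ∈ F.reps,
        ‖((F.Tinv a b)^[n] p).2 - r‖ ≤ ((F.q:ℝ))⁻¹ :=
      fun n => F.reps_cover _ (horb n).2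
    choose s hs1 hs2 using hchoice
    refine ⟨s, hs1, ?_⟩
    have hset := (hgseq s hs1).2
    have hmem : p ∈ {p : K × K | ‖p.1‖ ≤ 1 ∧ ‖p.2‖ ≤ 1 ∧
        ∀ n : ℕ, ‖((F.Tinv a b)^[n] p).1‖ ≤ 1 ∧
          ‖((F.Tinv a b)^[n] p).2 - s n‖ ≤ ((F.q : ℝ))⁻¹} :=
      ⟨(horb 0).1, (horb 0).2, fun n => ⟨(horb n).1, hs2 n⟩⟩
    have : p ∈ {p : K × K | ‖p.1‖ ≤ 1 ∧ p.2 = gseq s p.1} := by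
      rw [hset]; exact hmem
    exact this
  · rintro ⟨s, hmemr, hp⟩
    have hset := (hgseq s hmemr).2
    have hp' : p ∈ {p : K × K | ‖p.1‖ ≤ 1 ∧ ‖p.2‖ ≤ 1 ∧
        ∀ n : ℕ, ‖((F.Tinv a b)^[n] p).1‖ ≤ 1 ∧
          ‖((F.Tinv a b)^[n] p).2 - s n‖ ≤ ((F.q : ℝ))⁻¹} := by
      rw [← hset]; exact hp
    obtain ⟨h1, h2, h3⟩ := hp'
    refine (NAProof.attractor_iff F a b ha0 ha hb p).mpr fun n => ⟨(h3 n).1, ?_⟩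
    have e5 : ((F.Tinv a b)^[n] p).2
        = (((F.Tinv a b)^[n] p).2 - s n) + s n := by ring
    rw [e5]
    exact NAProof.na_two F (le_trans (h3 n).2 (NAProof.invq_le_one F))
      (F.norm_reps _ (hmemr n))
end
end

section
/- There exists a homeomorphism ω : F^ℤ → A_T from the space of bisequences over the residue field F (with the product topology) to the attractor A_T = ⋂_{n≥1} Tⁿ(R²) such that ω ∘ σ = T ∘ ω, where σ is the two-sided shift map. In particular, T restricted to A_T is topologically conjugate to the full shift on q symbols. -/
open scoped Classical
open MeasureTheory Filter

noncomputable section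

variable {K : Type*} [NormedField K]

namespace NAFproof

variable {K : Type*} [NormedField K]

lemma q_pos (F : NAField K) : 0 < (F.q : ℝ) := by
  have := F.one_lt_q; positivity

lemma one_lt_qR (F : NAField K) : 1 < (F.q : ℝ) := by
  exact_mod_cast F.one_lt_q

lemma inv_lt_one (F : NAField K) : (F.q : ℝ)⁻¹ < 1 :=
  inv_lt_one_of_one_lt₀ (one_lt_qR F)

lemma inv_nonneg' (F : NAField K) : 0 ≤ (F.q : ℝ)⁻¹ := by
  have := q_pos F; positivity

/-- value gap: norms `< 1` are `≤ 1/q`. -/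
lemma le_inv_of_lt_one (F : NAField K) {x : K} (hx : ‖x‖ < 1) :
    ‖x‖ ≤ (F.q : ℝ)⁻¹ := by
  rcases eq_or_ne x 0 with rfl | h
  · simpa using inv_nonneg' F
  · obtain ⟨n, hn⟩ := F.valGroup x h
    rw [hn] at hx ⊢
    have hq := one_lt_qR F
    have hn0 : n < 0 := by
      by_contra hge
      push_neg at hge
      exact absurd (one_le_zpow₀ hq.le hge) (not_le.2 hx)
    calc (F.q:ℝ) ^ n ≤ (F.q:ℝ) ^ (-1 : ℤ) := zpow_le_zpow_right₀ hq.le (by omega)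
      _ = (F.q:ℝ)⁻¹ := by simp

/-- The ring of integers as a subring. -/
def O (F : NAField K) : Subring K where
  carrier := {x : K | ‖x‖ ≤ 1}
  mul_mem' := by
    intro a b ha hb
    simp only [Set.mem_setOf_eq] at *
    calc ‖a * b‖ = ‖a‖ * ‖b‖ := norm_mul a b
      _ ≤ 1 * 1 := mul_le_mul ha hb (norm_nonneg b) zero_le_one
      _ = 1 := one_mul 1
  one_mem' := by simp
  add_mem' := by
    intro a b ha hb
    simp only [Set.mem_setOf_eq] at *
    exact le_trans (F.na a b) (max_le ha hb)
  zero_mem' := by simp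
  neg_mem' := by
    intro a ha
    simpa using ha

@[simp] lemma mem_O_iff (F : NAField K) {x : K} : x ∈ O F ↔ ‖x‖ ≤ 1 := Iff.rfl

/-- The maximal ideal. -/
def mI (F : NAField K) : Ideal (O F) where
  carrier := {x | ‖(x : K)‖ < 1}
  add_mem' := by
    intro a b ha hb
    simp only [Set.mem_setOf_eq] at *
    exact lt_of_le_of_lt (F.na (a : K) b) (max_lt ha hb)
  zero_mem' := by simp
  smul_mem' := by
    intro c x hx
    simp only [Set.mem_setOf_eq, smul_eq_mul] at *
    calc ‖(c : K) * (x : K)‖ = ‖(c : K)‖ * ‖(x : K)‖ := norm_mul _ _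
      _ ≤ 1 * ‖(x : K)‖ := by
          exact mul_le_mul_of_nonneg_right c.2 (norm_nonneg _)
      _ = ‖(x : K)‖ := one_mul _
      _ < 1 := hx

lemma mem_mI_iff (F : NAField K) {x : O F} : x ∈ mI F ↔ ‖(x : K)‖ < 1 := Iff.rfl

lemma mI_isMaximal (F : NAField K) : (mI F).IsMaximal := by
  rw [Ideal.isMaximal_iff]
  constructor
  · rw [mem_mI_iff]; simp
  · rintro J x hle hxm hxJ
    rw [mem_mI_iff, not_lt] at hxm
    have hx1 : ‖(x : K)‖ = 1 := le_antisymm x.2 hxm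
    have hxne : (x : K) ≠ 0 := by
      intro h; rw [h] at hx1; simp at hx1
    have hinv : (x : K)⁻¹ ∈ O F := by
      rw [mem_O_iff, norm_inv, hx1]; norm_num
    have hmul : (⟨(x : K)⁻¹, hinv⟩ : O F) * x = 1 :=
      Subtype.ext (inv_mul_cancel₀ hxne)
    rw [← hmul]
    exact J.mul_mem_left _ hxJ

end NAFproof
set_option maxHeartbeats 1000000
set_option synthInstance.maxHeartbeats 400000
namespace NAFproof

variable {K : Type*} [NormedField K]

/-- the residue map from reps. -/
def resmap (F : NAField K) (s : {s : K // s ∈ F.reps}) : (O F) ⧸ (mI F) :=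
  Ideal.Quotient.mk (mI F) ⟨(s : K), F.norm_reps s s.2⟩

lemma resmap_bij (F : NAField K) : Function.Bijective (resmap F) := by
  constructor
  · rintro ⟨s, hs⟩ ⟨t, ht⟩ h
    rw [resmap, resmap, Ideal.Quotient.eq] at h
    rw [mem_mI_iff] at h
    have : ‖s - t‖ < 1 := h
    by_contra hne
    have hne' : s ≠ t := fun h' => hne (Subtype.ext h')
    exact absurd (le_inv_of_lt_one F this)
      (not_le.2 (F.reps_sep s hs t ht hne'))
  · intro y
    obtain ⟨⟨x, hx⟩, rfl⟩ := Ideal.Quotient.mk_surjective (I := mI F) y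
    obtain ⟨s, hs, hxs⟩ := F.reps_cover x hx
    refine ⟨⟨s, hs⟩, ?_⟩
    rw [resmap, Ideal.Quotient.eq, mem_mI_iff]
    show ‖s - x‖ < 1
    rw [← norm_neg, neg_sub]
    exact lt_of_le_of_lt hxs (inv_lt_one F)

/-- every element of the residue field satisfies `x^q = x`, and `q = 0`. -/
lemma residue_facts (F : NAField K) :
    (∀ z : (O F) ⧸ (mI F), z ^ F.q = z) ∧ ((F.q : (O F) ⧸ (mI F)) = 0) := by
  haveI := mI_isMaximal F
  letI : Field ((O F) ⧸ (mI F)) := Ideal.Quotient.field (mI F)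
  letI : Fintype ((O F) ⧸ (mI F)) := Fintype.ofBijective _ (resmap_bij F)
  have hcard : Fintype.card ((O F) ⧸ (mI F)) = F.q := by
    rw [← Fintype.card_of_bijective (resmap_bij F), Fintype.card_coe, F.card_reps]
  constructor
  · intro z
    rw [← hcard]
    exact FiniteField.pow_card z
  · rw [← hcard]
    exact FiniteField.cast_card_eq_zero _

/-- `‖x^q - x‖ ≤ 1/q` for `x` in the ring of integers. -/
lemma norm_pow_sub_le (F : NAField K) {x : K} (hx : ‖x‖ ≤ 1) :
    ‖x ^ F.q - x‖ ≤ (F.q : ℝ)⁻¹ := by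
  apply le_inv_of_lt_one F
  set xx : O F := ⟨x, hx⟩ with hxx
  have : (Ideal.Quotient.mk (mI F)) (xx ^ F.q - xx) = 0 := by
    rw [map_sub, map_pow, (residue_facts F).1, sub_self]
  rw [Ideal.Quotient.eq_zero_iff_mem, mem_mI_iff] at this
  simpa using this

/-- geometric-sum factorization: for `x ≡ y` in `R`,
`(x^q - x) - (y^q - y) = (x - y) * (σ - 1)` with `‖σ‖ ≤ 1/q`. -/
lemma geom_factor (F : NAField K) {x y : K} (hx : ‖x‖ ≤ 1) (hy : ‖y‖ ≤ 1)
    (hxy : ‖x - y‖ ≤ (F.q : ℝ)⁻¹) :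
    ∃ σ : K, ‖σ‖ ≤ (F.q : ℝ)⁻¹ ∧
      (x ^ F.q - x) - (y ^ F.q - y) = (x - y) * (σ - 1) := by
  set xx : O F := ⟨x, hx⟩
  set yy : O F := ⟨y, hy⟩
  set σσ : O F := ∑ i ∈ Finset.range F.q, xx ^ i * yy ^ (F.q - 1 - i) with hσσ
  refine ⟨(σσ : K), ?_, ?_⟩
  · apply le_inv_of_lt_one F
    rw [← mem_mI_iff, ← Ideal.Quotient.eq_zero_iff_mem]
    have hxyq : (Ideal.Quotient.mk (mI F)) xx = (Ideal.Quotient.mk (mI F)) yy := by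
      rw [Ideal.Quotient.eq, mem_mI_iff]
      exact lt_of_le_of_lt hxy (inv_lt_one F)
    rw [hσσ, map_sum]
    have : ∀ i ∈ Finset.range F.q,
        (Ideal.Quotient.mk (mI F)) (xx ^ i * yy ^ (F.q - 1 - i)) =
          ((Ideal.Quotient.mk (mI F)) yy) ^ (F.q - 1) := by
      intro i hi
      rw [Finset.mem_range] at hi
      rw [map_mul, map_pow, map_pow, hxyq, ← pow_add]
      congr 1
      omega
    rw [Finset.sum_congr rfl this, Finset.sum_const, Finset.card_range, nsmul_eq_mul,
      (residue_facts F).2, zero_mul]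
  · have key : (∑ i ∈ Finset.range F.q, x ^ i * y ^ (F.q - 1 - i)) * (x - y)
        = x ^ F.q - y ^ F.q := geom_sum₂_mul x y F.q
    have hc : ((σσ : K)) = ∑ i ∈ Finset.range F.q, x ^ i * y ^ (F.q - 1 - i) := by
      rw [hσσ]
      push_cast
      rfl
    rw [hc]
    linear_combination -key

end NAFproof
namespace NAFproof

variable {K : Type*} [NormedField K]

lemma na_sub (F : NAField K) (x y : K) : ‖x - y‖ ≤ max ‖x‖ ‖y‖ := by
  have := F.na x (-y)
  simpa [sub_eq_add_neg] using this

/-- if `‖z‖ < 1` then `‖z - 1‖ = 1`. -/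
lemma norm_sub_one (F : NAField K) {z : K} (hz : ‖z‖ < 1) : ‖z - 1‖ = 1 := by
  apply le_antisymm
  · exact le_trans (na_sub F z 1) (by simp [hz.le])
  · have : ‖z - (z - 1)‖ ≤ max ‖z‖ ‖z - 1‖ := na_sub F _ _
    simp only [sub_sub_cancel, norm_one] at this
    rcases max_cases ‖z‖ ‖z - 1‖ with ⟨h1, _⟩ | ⟨h1, _⟩
    · rw [h1] at this; linarith
    · rw [h1] at this; exact this

/-- exact scaling: `‖(x^q - x) - (y^q - y)‖ = ‖x - y‖` for `x ≡ y` in `R`. -/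
lemma norm_hdiff (F : NAField K) {x y : K} (hx : ‖x‖ ≤ 1) (hy : ‖y‖ ≤ 1)
    (hxy : ‖x - y‖ ≤ (F.q : ℝ)⁻¹) :
    ‖(x ^ F.q - x) - (y ^ F.q - y)‖ = ‖x - y‖ := by
  obtain ⟨σ, hσ, heq⟩ := geom_factor F hx hy hxy
  rw [heq, norm_mul, norm_sub_one F (lt_of_le_of_lt hσ (inv_lt_one F)), mul_one]

/-- Newton/contraction: solving `b (x^q - x) = c` near `s`. -/
lemma solve_exists (F : NAField K) (b : K) (hb : ‖b‖ = (F.q : ℝ)) (s c : K)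
    (hs : ‖s‖ ≤ 1) (hc : ‖c‖ ≤ 1) :
    ∃ x : K, ‖x - s‖ ≤ (F.q : ℝ)⁻¹ ∧ b * (x ^ F.q - x) = c := by
  haveI := F.complete
  have hq0 : (0:ℝ) < (F.q : ℝ) := q_pos F
  have hbne : b ≠ 0 := by
    intro h; rw [h, norm_zero] at hb; linarith
  set c' : K := b⁻¹ * c with hc'def
  have hc' : ‖c'‖ ≤ (F.q : ℝ)⁻¹ := by
    rw [hc'def, norm_mul, norm_inv, hb]
    calc (F.q:ℝ)⁻¹ * ‖c‖ ≤ (F.q:ℝ)⁻¹ * 1 :=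
      mul_le_mul_of_nonneg_left hc (inv_nonneg' F)
    _ = (F.q:ℝ)⁻¹ := mul_one _
  -- iteration
  set h : K → K := fun t => t ^ F.q - t with hhdef
  set u : ℕ → K := fun n => n.rec s (fun _ prev => prev - (c' - h prev)) with hudef
  have hu0 : u 0 = s := rfl
  have hustep : ∀ n, u (n+1) = u n - (c' - h (u n)) := fun n => rfl
  -- invariants
  have hinv : ∀ n, ‖u n - s‖ ≤ (F.q : ℝ)⁻¹ ∧ ‖c' - h (u n)‖ ≤ ((F.q : ℝ)⁻¹) ^ (n+1) := by
    intro n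
    induction n with
    | zero =>
      constructor
      · rw [hu0]
        simpa using inv_nonneg' F
      · rw [hu0, pow_one]
        refine le_trans (na_sub F _ _) (max_le hc' ?_)
        rw [hhdef]
        exact norm_pow_sub_le F hs
    | succ n ih =>
      obtain ⟨ih1, ih2⟩ := ih
      have hun : ‖u n‖ ≤ 1 := by
        have := na_sub F (u n - s) (-s)
        simp only [sub_neg_eq_add, sub_add_cancel, norm_neg] at this
        exact le_trans this (max_le (le_trans ih1 (inv_lt_one F).le) hs)
      have hdiffn : ‖u (n+1) - u n‖ ≤ ((F.q : ℝ)⁻¹) ^ (n+1) := by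
        rw [hustep]
        rw [show u n - (c' - h (u n)) - u n = -(c' - h (u n)) by ring, norm_neg]
        simpa using ih2
      have hd1 : ‖u (n+1) - u n‖ ≤ (F.q : ℝ)⁻¹ := by
        refine le_trans hdiffn ?_
        calc ((F.q:ℝ)⁻¹)^(n+1) ≤ ((F.q:ℝ)⁻¹)^1 :=
          pow_le_pow_of_le_one (inv_nonneg' F) (inv_lt_one F).le (by omega)
        _ = (F.q:ℝ)⁻¹ := pow_one _
      have hs1 : ‖u (n+1) - s‖ ≤ (F.q : ℝ)⁻¹ := by
        have : ‖(u (n+1) - u n) + (u n - s)‖ ≤ max ‖u (n+1) - u n‖ ‖u n - s‖ := F.na _ _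
        simp only [sub_add_sub_cancel] at this
        exact le_trans this (max_le hd1 ih1)
      refine ⟨hs1, ?_⟩
      have hun1 : ‖u (n+1)‖ ≤ 1 := by
        have := na_sub F (u (n+1) - s) (-s)
        simp only [sub_neg_eq_add, sub_add_cancel, norm_neg] at this
        exact le_trans this (max_le (le_trans hs1 (inv_lt_one F).le) hs)
      obtain ⟨σ, hσ, heq⟩ := geom_factor F hun1 hun hd1
      have hcomp : c' - h (u (n+1)) = (c' - h (u n)) * σ := by
        have h1 : h (u (n+1)) - h (u n) = (u (n+1) - u n) * (σ - 1) := heq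
        have h2 : u (n+1) - u n = -(c' - h (u n)) := by rw [hustep]; ring
        rw [h2] at h1
        have : h (u (n+1)) = h (u n) - (c' - h (u n)) * (σ - 1) := by
          linear_combination h1
        rw [this]; ring
      rw [hcomp, norm_mul, pow_succ]
      exact mul_le_mul ih2 hσ (norm_nonneg _) (pow_nonneg (inv_nonneg' F) _)
  -- Cauchy
  have hcau : CauchySeq u := by
    apply cauchySeq_of_le_geometric ((F.q:ℝ)⁻¹) ((F.q:ℝ)⁻¹) (inv_lt_one F)
    intro n
    rw [dist_eq_norm]
    rw [hustep, show u n - (u n - (c' - h (u n))) = c' - h (u n) by ring]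
    calc ‖c' - h (u n)‖ ≤ ((F.q:ℝ)⁻¹)^(n+1) := (hinv n).2
    _ = (F.q:ℝ)⁻¹ * ((F.q:ℝ)⁻¹)^n := by ring
  obtain ⟨x, hx⟩ := cauchySeq_tendsto_of_complete hcau
  have hhx : Filter.Tendsto (fun n => h (u n)) Filter.atTop (nhds (h x)) := by
    have hcont : Continuous h := by
      rw [hhdef]; exact (continuous_pow F.q).sub continuous_id
    exact (hcont.continuousAt).tendsto.comp hx
  have herr : Filter.Tendsto (fun n => c' - h (u n)) Filter.atTop (nhds 0) := by
    have : Filter.Tendsto (fun n => ‖c' - h (u n)‖) Filter.atTop (nhds 0) := by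
      apply squeeze_zero (fun n => norm_nonneg _) (fun n => (hinv n).2)
      have : Filter.Tendsto (fun n : ℕ => ((F.q:ℝ)⁻¹)^(n+1)) Filter.atTop (nhds 0) := by
        have h0 := tendsto_pow_atTop_nhds_zero_of_lt_one (inv_nonneg' F) (inv_lt_one F)
        exact h0.comp (Filter.tendsto_add_atTop_nat 1)
      exact this
    exact tendsto_zero_iff_norm_tendsto_zero.2 this
  have hxc' : h x = c' := by
    have h1 : Filter.Tendsto (fun n => c' - h (u n)) Filter.atTop (nhds (c' - h x)) :=
      tendsto_const_nhds.sub hhx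
    have := tendsto_nhds_unique h1 herr
    linear_combination -this
  have hxs : ‖x - s‖ ≤ (F.q : ℝ)⁻¹ := by
    have h1 : Filter.Tendsto (fun n => ‖u n - s‖) Filter.atTop (nhds ‖x - s‖) :=
      (continuous_norm.comp (continuous_id.sub continuous_const)).continuousAt.tendsto.comp hx
    exact le_of_tendsto h1 (Filter.Eventually.of_forall (fun n => (hinv n).1))
  refine ⟨x, hxs, ?_⟩
  have hxc'' : x ^ F.q - x = c' := hxc'
  rw [hxc'', hc'def]
  field_simp

end NAFproof
namespace NAFproof

variable {K : Type*} [NormedField K]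

/-- A full orbit of `T` staying in `R²`, encoded as a bisequence. -/
def IsOrb (F : NAField K) (a b : K) (x : ℤ → K) : Prop :=
  (∀ k, ‖x k‖ ≤ 1) ∧
  ∀ k : ℤ, x (k + 1) = a * x (k - 1) + b * (x k ^ F.q - x k)

/-- key scaling identity for two orbits close at position `k`. -/
lemma key_step (F : NAField K) {a b : K} (hb : ‖b‖ = (F.q : ℝ))
    {x y : ℤ → K} (hx : IsOrb F a b x) (hy : IsOrb F a b y) (k : ℤ)
    (hclk : ‖x k - y k‖ ≤ (F.q : ℝ)⁻¹) :
    (F.q : ℝ) * ‖x k - y k‖ =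
      ‖(x (k + 1) - y (k + 1)) - a * (x (k - 1) - y (k - 1))‖ := by
  have h1 : b * (x k ^ F.q - x k) - b * (y k ^ F.q - y k)
      = (x (k + 1) - y (k + 1)) - a * (x (k - 1) - y (k - 1)) := by
    have ex := hx.2 k
    have ey := hy.2 k
    linear_combination ey - ex
  rw [← h1, ← mul_sub, norm_mul, hb, norm_hdiff F (hx.1 k) (hy.1 k) hclk]

/-- uniqueness of orbits with the same itinerary. -/
lemma orbit_unique (F : NAField K) {a b : K} (ha : ‖a‖ < 1) (hb : ‖b‖ = (F.q : ℝ))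
    {x y : ℤ → K} (hx : IsOrb F a b x) (hy : IsOrb F a b y)
    (hcl : ∀ k, ‖x k - y k‖ ≤ (F.q : ℝ)⁻¹) : x = y := by
  have hq0 : (0:ℝ) < (F.q : ℝ) := q_pos F
  have main : ∀ n : ℕ, ∀ k : ℤ, ‖x k - y k‖ ≤ ((F.q : ℝ)⁻¹) ^ (n + 1) := by
    intro n
    induction n with
    | zero => intro k; simpa using hcl k
    | succ n ih =>
      intro k
      have hk := key_step F hb hx hy k (hcl k)
      have hbound : ‖(x (k + 1) - y (k + 1)) - a * (x (k - 1) - y (k - 1))‖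
          ≤ ((F.q : ℝ)⁻¹) ^ (n + 1) := by
        refine le_trans (na_sub F _ _) (max_le (ih _) ?_)
        rw [norm_mul]
        calc ‖a‖ * ‖x (k-1) - y (k-1)‖ ≤ 1 * ((F.q : ℝ)⁻¹) ^ (n + 1) :=
          mul_le_mul ha.le (ih _) (norm_nonneg _) zero_le_one
        _ = ((F.q : ℝ)⁻¹) ^ (n + 1) := one_mul _
      rw [← hk] at hbound
      calc ‖x k - y k‖ = (F.q:ℝ)⁻¹ * ((F.q:ℝ) * ‖x k - y k‖) := by
            field_simp
        _ ≤ (F.q:ℝ)⁻¹ * ((F.q : ℝ)⁻¹) ^ (n + 1) :=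
            mul_le_mul_of_nonneg_left hbound (inv_nonneg' F)
        _ = ((F.q : ℝ)⁻¹) ^ (n + 2) := by ring
  funext k
  have h0 : ‖x k - y k‖ ≤ 0 := by
    have hlim : Filter.Tendsto (fun n : ℕ => ((F.q:ℝ)⁻¹)^(n+1)) Filter.atTop (nhds 0) :=
      (tendsto_pow_atTop_nhds_zero_of_lt_one (inv_nonneg' F) (inv_lt_one F)).comp
        (Filter.tendsto_add_atTop_nat 1)
    exact ge_of_tendsto hlim (Filter.Eventually.of_forall (fun n => main n k))
  have := norm_nonneg (x k - y k)
  have : ‖x k - y k‖ = 0 := le_antisymm h0 this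
  rw [norm_eq_zero, sub_eq_zero] at this
  exact this

/-- window estimate: orbits whose itineraries agree on `|k| ≤ M` are
`q^{-M}`-close at positions `|k| ≤ 1`. -/
lemma orbit_window (F : NAField K) {a b : K} (ha : ‖a‖ < 1) (hb : ‖b‖ = (F.q : ℝ))
    {x y : ℤ → K} (hx : IsOrb F a b x) (hy : IsOrb F a b y) (M : ℕ)
    (hcl : ∀ k : ℤ, |k| ≤ (M : ℤ) → ‖x k - y k‖ ≤ (F.q : ℝ)⁻¹) :
    ∀ i : ℕ, i ≤ M → ∀ k : ℤ, |k| ≤ (M : ℤ) - i → ‖x k - y k‖ ≤ ((F.q : ℝ)⁻¹) ^ (i + 1) := by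
  intro i
  induction i with
  | zero =>
    intro _ k hk
    simpa using hcl k (by simpa using hk)
  | succ i ih =>
    intro hiM k hk
    have hk' := abs_le.1 hk
    have hkM : |k| ≤ (M : ℤ) := abs_le.2 (by omega)
    have hk1 : |k + 1| ≤ (M : ℤ) - i := abs_le.2 (by omega)
    have hk2 : |k - 1| ≤ (M : ℤ) - i := abs_le.2 (by omega)
    have hkey := key_step F hb hx hy k (hcl k hkM)
    have hbound : ‖(x (k + 1) - y (k + 1)) - a * (x (k - 1) - y (k - 1))‖
        ≤ ((F.q : ℝ)⁻¹) ^ (i + 1) := by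
      refine le_trans (na_sub F _ _) (max_le (ih (by omega) _ hk1) ?_)
      rw [norm_mul]
      calc ‖a‖ * ‖x (k-1) - y (k-1)‖ ≤ 1 * ((F.q : ℝ)⁻¹) ^ (i + 1) :=
        mul_le_mul ha.le (ih (by omega) _ hk2) (norm_nonneg _) zero_le_one
      _ = ((F.q : ℝ)⁻¹) ^ (i + 1) := one_mul _
    rw [← hkey] at hbound
    have hq0 : (0:ℝ) < (F.q : ℝ) := q_pos F
    calc ‖x k - y k‖ = (F.q:ℝ)⁻¹ * ((F.q:ℝ) * ‖x k - y k‖) := by field_simp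
      _ ≤ (F.q:ℝ)⁻¹ * ((F.q : ℝ)⁻¹) ^ (i + 1) :=
          mul_le_mul_of_nonneg_left hbound (inv_nonneg' F)
      _ = ((F.q : ℝ)⁻¹) ^ (i + 2) := by ring

/-- existence of an orbit shadowing a given itinerary. -/
lemma orbit_exists (F : NAField K) {a b : K} (ha : ‖a‖ < 1) (hb : ‖b‖ = (F.q : ℝ))
    (s : ℤ → K) (hs : ∀ k, ‖s k‖ ≤ 1) :
    ∃ x : ℤ → K, IsOrb F a b x ∧ ∀ k, ‖x k - s k‖ ≤ (F.q : ℝ)⁻¹ := by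
  classical
  haveI := F.complete
  -- choice function for the solver
  have hsolve : ∀ S C : K, ‖S‖ ≤ 1 → ‖C‖ ≤ 1 →
      ∃ x : K, ‖x - S‖ ≤ (F.q : ℝ)⁻¹ ∧ b * (x ^ F.q - x) = C :=
    fun S C hS hC => solve_exists F b hb S C hS hC
  choose! sol hsol1 hsol2 using hsolve
  set u : ℕ → ℤ → K :=
    fun n => n.rec s (fun _ prev k => sol (s k) (prev (k+1) - a * prev (k-1))) with hudef
  have hu0 : u 0 = s := rfl
  have hustep : ∀ n k, u (n+1) k = sol (s k) (u n (k+1) - a * u n (k-1)) := fun n k => rfl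
  -- all iterates stay in R and near s
  have hne : ∀ n k, ‖u n k - s k‖ ≤ (F.q : ℝ)⁻¹ ∧ ‖u n k‖ ≤ 1 := by
    intro n
    induction n with
    | zero => intro k; constructor
              · rw [hu0, sub_self, norm_zero]; exact inv_nonneg' F
              · exact hs k
    | succ n ih =>
      intro k
      have hC : ‖u n (k+1) - a * u n (k-1)‖ ≤ 1 := by
        refine le_trans (na_sub F _ _) (max_le (ih (k+1)).2 ?_)
        rw [norm_mul]
        calc ‖a‖ * ‖u n (k-1)‖ ≤ 1 * 1 :=
          mul_le_mul ha.le (ih (k-1)).2 (norm_nonneg _) zero_le_one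
        _ = 1 := one_mul 1
      have h1 := hsol1 (s k) (u n (k+1) - a * u n (k-1)) (hs k) hC
      rw [← hustep] at h1
      refine ⟨h1, ?_⟩
      have := na_sub F (u (n+1) k - s k) (- s k)
      simp only [sub_neg_eq_add, sub_add_cancel, norm_neg] at this
      exact le_trans this (max_le (le_trans h1 (inv_lt_one F).le) (hs k))
  have heqn : ∀ n k, b * ((u (n+1) k) ^ F.q - u (n+1) k) = u n (k+1) - a * u n (k-1) := by
    intro n k
    have hC : ‖u n (k+1) - a * u n (k-1)‖ ≤ 1 := by
      refine le_trans (na_sub F _ _) (max_le (hne n (k+1)).2 ?_)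
      rw [norm_mul]
      calc ‖a‖ * ‖u n (k-1)‖ ≤ 1 * 1 :=
        mul_le_mul ha.le (hne n (k-1)).2 (norm_nonneg _) zero_le_one
      _ = 1 := one_mul 1
    have := hsol2 (s k) (u n (k+1) - a * u n (k-1)) (hs k) hC
    rw [← hustep] at this
    exact this
  have hq0 : (0:ℝ) < (F.q : ℝ) := q_pos F
  -- geometric convergence
  have hgeo : ∀ n k, ‖u (n+1) k - u n k‖ ≤ ((F.q : ℝ)⁻¹) ^ (n + 1) := by
    intro n
    induction n with
    | zero =>
      intro k
      have := na_sub F (u 1 k - s k) (u 0 k - s k)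
      rw [sub_sub_sub_cancel_right, hu0] at this
      refine le_trans this (max_le ?_ ?_)
      · simpa using (hne 1 k).1
      · rw [sub_self, norm_zero]
        exact le_trans (inv_nonneg' F) (le_of_eq (pow_one _).symm)
    | succ n ih =>
      intro k
      have hd : ‖u (n+2) k - u (n+1) k‖ ≤ (F.q : ℝ)⁻¹ := by
        have := na_sub F (u (n+2) k - s k) (u (n+1) k - s k)
        rw [sub_sub_sub_cancel_right] at this
        exact le_trans this (max_le (hne (n+2) k).1 (hne (n+1) k).1)
      obtain ⟨σ, hσ, heqf⟩ := geom_factor F (hne (n+2) k).2 (hne (n+1) k).2 hd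
      have hscale : (F.q : ℝ) * ‖u (n+2) k - u (n+1) k‖ =
          ‖(u (n+1) (k+1) - u n (k+1)) - a * (u (n+1) (k-1) - u n (k-1))‖ := by
        have h1 : b * ((u (n+2) k) ^ F.q - u (n+2) k) - b * ((u (n+1) k) ^ F.q - u (n+1) k)
            = (u (n+1) (k+1) - u n (k+1)) - a * (u (n+1) (k-1) - u n (k-1)) := by
          have e1 := heqn (n+1) k
          have e2 := heqn n k
          linear_combination e1 - e2
        rw [← h1, ← mul_sub, norm_mul, hb,
          norm_hdiff F (hne (n+2) k).2 (hne (n+1) k).2 hd]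
      have hbound : ‖(u (n+1) (k+1) - u n (k+1)) - a * (u (n+1) (k-1) - u n (k-1))‖
          ≤ ((F.q : ℝ)⁻¹) ^ (n + 1) := by
        refine le_trans (na_sub F _ _) (max_le (ih _) ?_)
        rw [norm_mul]
        calc ‖a‖ * ‖u (n+1) (k-1) - u n (k-1)‖ ≤ 1 * ((F.q : ℝ)⁻¹) ^ (n + 1) :=
          mul_le_mul ha.le (ih _) (norm_nonneg _) zero_le_one
        _ = ((F.q : ℝ)⁻¹) ^ (n + 1) := one_mul _
      rw [← hscale] at hbound
      calc ‖u (n+2) k - u (n+1) k‖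
          = (F.q:ℝ)⁻¹ * ((F.q:ℝ) * ‖u (n+2) k - u (n+1) k‖) := by field_simp
        _ ≤ (F.q:ℝ)⁻¹ * ((F.q : ℝ)⁻¹) ^ (n + 1) :=
            mul_le_mul_of_nonneg_left hbound (inv_nonneg' F)
        _ = ((F.q : ℝ)⁻¹) ^ (n + 2) := by ring
  -- pointwise limits
  have hcau : ∀ k, CauchySeq (fun n => u n k) := by
    intro k
    apply cauchySeq_of_le_geometric ((F.q:ℝ)⁻¹) ((F.q:ℝ)⁻¹) (inv_lt_one F)
    intro n
    rw [dist_eq_norm, ← norm_neg, neg_sub]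
    calc ‖u (n+1) k - u n k‖ ≤ ((F.q:ℝ)⁻¹)^(n+1) := hgeo n k
      _ = (F.q:ℝ)⁻¹ * ((F.q:ℝ)⁻¹)^n := by ring
  choose x hx using fun k => cauchySeq_tendsto_of_complete (hcau k)
  have hx1 : ∀ k, Filter.Tendsto (fun n => u (n+1) k) Filter.atTop (nhds (x k)) :=
    fun k => (hx k).comp (Filter.tendsto_add_atTop_nat 1)
  -- limit bounds
  have hxs : ∀ k, ‖x k - s k‖ ≤ (F.q : ℝ)⁻¹ := by
    intro k
    have h1 : Filter.Tendsto (fun n => ‖u n k - s k‖) Filter.atTop (nhds ‖x k - s k‖) :=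
      (continuous_norm.comp (continuous_id.sub continuous_const)).continuousAt.tendsto.comp (hx k)
    exact le_of_tendsto h1 (Filter.Eventually.of_forall (fun n => (hne n k).1))
  have hxR : ∀ k, ‖x k‖ ≤ 1 := by
    intro k
    have h1 : Filter.Tendsto (fun n => ‖u n k‖) Filter.atTop (nhds ‖x k‖) :=
      (continuous_norm).continuousAt.tendsto.comp (hx k)
    exact le_of_tendsto h1 (Filter.Eventually.of_forall (fun n => (hne n k).2))
  -- limit equation
  have hrel : ∀ k : ℤ, x (k + 1) = a * x (k - 1) + b * (x k ^ F.q - x k) := by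
    intro k
    have hL : Filter.Tendsto (fun n => b * ((u (n+1) k) ^ F.q - u (n+1) k))
        Filter.atTop (nhds (b * (x k ^ F.q - x k))) := by
      have hcont : Continuous (fun t : K => b * (t ^ F.q - t)) :=
        continuous_const.mul ((continuous_pow F.q).sub continuous_id)
      exact (hcont.continuousAt).tendsto.comp (hx1 k)
    have hR : Filter.Tendsto (fun n => u n (k+1) - a * u n (k-1))
        Filter.atTop (nhds (x (k+1) - a * x (k-1))) :=
      (hx (k+1)).sub ((tendsto_const_nhds).mul (hx (k-1)))
    have heq : (fun n => b * ((u (n+1) k) ^ F.q - u (n+1) k))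
        = (fun n => u n (k+1) - a * u n (k-1)) := funext (fun n => heqn n k)
    rw [heq] at hL
    have := tendsto_nhds_unique hL hR
    linear_combination -this
  exact ⟨x, ⟨hxR, hrel⟩, hxs⟩

end NAFproof
namespace NAFproof

variable {K : Type*} [NormedField K]

lemma Tinv_Tmap (F : NAField K) {a : K} (b : K) (ha0 : a ≠ 0) (p : K × K) :
    F.Tinv a b (F.Tmap a b p) = p := by
  simp only [NAField.Tmap, NAField.Tinv]
  refine Prod.ext rfl ?_
  field_simp
  ring

lemma Tmap_Tinv (F : NAField K) {a : K} (b : K) (ha0 : a ≠ 0) (p : K × K) :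
    F.Tmap a b (F.Tinv a b p) = p := by
  simp only [NAField.Tmap, NAField.Tinv]
  refine Prod.ext ?_ rfl
  field_simp
  ring

lemma Tmap_mem (F : NAField K) {a b : K} (ha : ‖a‖ < 1) (hb : ‖b‖ = (F.q : ℝ))
    {p : K × K} (hp : p ∈ unitPoly K) : F.Tmap a b p ∈ unitPoly K := by
  obtain ⟨h1, h2⟩ := hp
  refine ⟨?_, h1⟩
  refine le_trans (F.na _ _) (max_le ?_ ?_)
  · show ‖a * p.2‖ ≤ 1
    rw [norm_mul]
    calc ‖a‖ * ‖p.2‖ ≤ 1 * 1 := mul_le_mul ha.le h2 (norm_nonneg _) zero_le_one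
      _ = 1 := one_mul 1
  · show ‖b * (p.1 ^ F.q - p.1)‖ ≤ 1
    rw [norm_mul, hb]
    have := norm_pow_sub_le F h1
    calc (F.q:ℝ) * ‖p.1 ^ F.q - p.1‖ ≤ (F.q:ℝ) * (F.q:ℝ)⁻¹ :=
      mul_le_mul_of_nonneg_left this (q_pos F).le
    _ = 1 := mul_inv_cancel₀ (q_pos F).ne'

lemma iterZ_zero (F : NAField K) (a b : K) (p : K × K) : F.iterZ a b 0 p = p := by
  simp [NAField.iterZ]

lemma iterZ_add_one (F : NAField K) {a : K} (b : K) (ha0 : a ≠ 0) (k : ℤ) (p : K × K) :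
    F.iterZ a b (k + 1) p = F.Tmap a b (F.iterZ a b k p) := by
  rcases le_or_gt 0 k with hk | hk
  · have hk1 : (0:ℤ) ≤ k + 1 := by omega
    rw [NAField.iterZ, NAField.iterZ, if_pos hk1, if_pos hk]
    have : (k + 1).toNat = k.toNat + 1 := by omega
    rw [this, Function.iterate_succ_apply']
  · rcases eq_or_lt_of_le (by omega : k + 1 ≤ 0) with hk0 | hk0
    · have hkm1 : k = -1 := by omega
      subst hkm1
      rw [NAField.iterZ, NAField.iterZ]
      norm_num
      exact (Tmap_Tinv F b ha0 p).symm
    · rw [NAField.iterZ, NAField.iterZ, if_neg (by omega), if_neg (by omega)]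
      have h1 : (-k).toNat = (-(k+1)).toNat + 1 := by omega
      rw [h1, Function.iterate_succ_apply']
      rw [Tmap_Tinv F b ha0]

lemma iterZ_sub_one (F : NAField K) {a : K} (b : K) (ha0 : a ≠ 0) (k : ℤ) (p : K × K) :
    F.iterZ a b (k - 1) p = F.Tinv a b (F.iterZ a b k p) := by
  have h := iterZ_add_one F b ha0 (k - 1) p
  rw [sub_add_cancel] at h
  rw [h, Tinv_Tmap F b ha0]

/-- membership in the attractor is equivalent to the whole `ℤ`-orbit staying in `R²`. -/
lemma mem_attractor_iff (F : NAField K) {a b : K} (ha0 : a ≠ 0) (ha : ‖a‖ < 1)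
    (hb : ‖b‖ = (F.q : ℝ)) (p : K × K) :
    p ∈ F.Attractor a b ↔ ∀ k : ℤ, F.iterZ a b k p ∈ unitPoly K := by
  have hiter : ∀ n : ℕ, ∀ w : K × K, (F.Tinv a b)^[n] ((F.Tmap a b)^[n] w) = w := by
    intro n
    exact Function.LeftInverse.iterate (fun w => Tinv_Tmap F b ha0 w) n
  have hiter' : ∀ n : ℕ, ∀ w : K × K, (F.Tmap a b)^[n] ((F.Tinv a b)^[n] w) = w := by
    intro n
    exact Function.LeftInverse.iterate (fun w => Tmap_Tinv F b ha0 w) n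
  constructor
  · intro hp
    have hmem : ∀ n : ℕ, 1 ≤ n → p ∈ (F.Tmap a b)^[n] '' unitPoly K := by
      intro n hn
      have := Set.mem_iInter₂.1 hp n hn
      exact this
    -- backward orbit
    have hback : ∀ n : ℕ, (F.Tinv a b)^[n] p ∈ unitPoly K := by
      intro n
      rcases Nat.eq_zero_or_pos n with rfl | hn
      · -- p itself : p = Tmap (Tinv p), Tinv p ∈ unitPoly
        obtain ⟨w, hw, hwp⟩ := hmem 1 le_rfl
        simp only [Function.iterate_one] at hwp
        simp only [Function.iterate_zero, id_eq]
        rw [← hwp]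
        exact Tmap_mem F ha hb hw
      · obtain ⟨w, hw, hwp⟩ := hmem n hn
        have : (F.Tinv a b)^[n] p = w := by rw [← hwp, hiter n w]
        rw [this]; exact hw
    intro k
    rcases le_or_gt 0 k with hk | hk
    · -- forward: induction
      have hfwd : ∀ m : ℕ, F.iterZ a b (m : ℤ) p ∈ unitPoly K := by
        intro m
        induction m with
        | zero => rw [Int.natCast_zero, iterZ_zero]; simpa using hback 0
        | succ m ih =>
          have e : ((m+1 : ℕ) : ℤ) = (m : ℤ) + 1 := by push_cast; ring
          rw [show (((m+1 : ℕ) : ℤ)) = (m : ℤ) + 1 from e, iterZ_add_one F b ha0]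
          exact Tmap_mem F ha hb ih
      have : k = ((k.toNat : ℕ) : ℤ) := by omega
      rw [this]; exact hfwd k.toNat
    · rw [NAField.iterZ, if_neg (by omega)]
      exact hback _
  · intro h
    rw [NAField.Attractor]
    refine Set.mem_iInter₂.2 (fun n hn => ?_)
    refine ⟨(F.Tinv a b)^[n] p, ?_, hiter' n p⟩
    have := h (-(n : ℤ))
    rcases Nat.eq_zero_or_pos n with rfl | hn'
    · simpa using (by simpa [iterZ_zero] using this : p ∈ unitPoly K)
    · rw [NAField.iterZ, if_neg (by omega)] at this
      simpa using this

/-- orbits give points of the attractor: `iterZ k (x 0, x (-1)) = (x k, x (k-1))`. -/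
lemma orbit_iterZ (F : NAField K) {a b : K} (ha0 : a ≠ 0) {x : ℤ → K}
    (hx : IsOrb F a b x) : ∀ k : ℤ, F.iterZ a b k (x 0, x (-1)) = (x k, x (k - 1)) := by
  intro k
  induction k using Int.induction_on with
  | zero => rw [iterZ_zero]; norm_num
  | succ i ih =>
    rw [iterZ_add_one F b ha0, ih]
    simp only [NAField.Tmap]
    have := hx.2 i
    refine Prod.ext ?_ ?_
    · simp only []
      rw [← this]
    · simp only []
      congr 1
      omega
  | pred i ih =>
    rw [show (-(i:ℤ) - 1) = (-(i:ℤ)) - 1 from rfl, iterZ_sub_one F b ha0, ih]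
    simp only [NAField.Tinv]
    refine Prod.ext rfl ?_
    have hrel := hx.2 (-(i:ℤ) - 1 - 1 + 1)
    have e1 : (-(i:ℤ) - 1 - 1 + 1 + 1) = -(i:ℤ) := by ring
    have e2 : (-(i:ℤ) - 1 - 1 + 1 - 1) = -(i:ℤ) - 1 - 1 := by ring
    have e3 : (-(i:ℤ) - 1 - 1 + 1) = -(i:ℤ) - 1 := by ring
    rw [e1, e2, e3] at hrel
    simp only []
    rw [hrel]
    field_simp
    ring

end NAFproof
open NAFproof in
theorem stmt14 (F : NAField K) (a b : K) (ha0 : a ≠ 0) (ha : ‖a‖ < 1)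
    (hb : ‖b‖ = (F.q : ℝ)) :
    ∃ ω : (ℤ → {s : K // s ∈ F.reps}) ≃ₜ {p : K × K // p ∈ F.Attractor a b},
      ∀ s : ℤ → {s : K // s ∈ F.reps},
        ((ω fun k => s (k + 1)) : K × K) = F.Tmap a b (ω s) := by
  classical
  haveI := F.complete
  -- ultrametric triangle helper
  have tri : ∀ u v w : K, ‖u - v‖ ≤ (F.q:ℝ)⁻¹ → ‖w - v‖ ≤ (F.q:ℝ)⁻¹ →
      ‖u - w‖ ≤ (F.q:ℝ)⁻¹ := by
    intro u v w h1 h2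
    have := na_sub F (u - v) (w - v)
    rw [sub_sub_sub_cancel_right] at this
    exact le_trans this (max_le h1 h2)
  -- orbit selection
  choose! orb horb hsh using fun (s : ℤ → K) (hs : ∀ k, ‖s k‖ ≤ 1) =>
    orbit_exists F ha hb s hs
  set RT := {s : K // s ∈ F.reps} with hRT
  let sK : (ℤ → RT) → (ℤ → K) := fun s k => (s k : K)
  have hsK : ∀ s : ℤ → RT, ∀ k, ‖sK s k‖ ≤ 1 := fun s k => F.norm_reps _ (s k).2
  have horb' : ∀ s : ℤ → RT, IsOrb F a b (orb (sK s)) := fun s => horb _ (hsK s)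
  have hsh' : ∀ s : ℤ → RT, ∀ k, ‖orb (sK s) k - sK s k‖ ≤ (F.q:ℝ)⁻¹ :=
    fun s => hsh _ (hsK s)
  have hmem : ∀ s : ℤ → RT, ((orb (sK s)) 0, (orb (sK s)) (-1)) ∈ F.Attractor a b := by
    intro s
    rw [mem_attractor_iff F ha0 ha hb]
    intro k
    rw [orbit_iterZ F ha0 (horb' s) k]
    exact ⟨(horb' s).1 k, (horb' s).1 (k-1)⟩
  let f : (ℤ → RT) → {p : K × K // p ∈ F.Attractor a b} :=
    fun s => ⟨((orb (sK s)) 0, (orb (sK s)) (-1)), hmem s⟩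
  -- orbits are determined by their value at (0, -1)
  have orbpt : ∀ x y : ℤ → K, IsOrb F a b x → IsOrb F a b y →
      x 0 = y 0 → x (-1) = y (-1) → x = y := by
    intro x y hx hy h0 hm
    funext k
    have h1 := orbit_iterZ F ha0 hx k
    have h2 := orbit_iterZ F ha0 hy k
    rw [h0, hm] at h1
    have := h1.symm.trans h2
    exact (Prod.ext_iff.1 this).1
  -- injectivity
  have hinj : Function.Injective f := by
    intro s s' hss
    have hEq : ((orb (sK s)) 0, (orb (sK s)) (-1))
        = ((orb (sK s')) 0, (orb (sK s')) (-1)) := congrArg Subtype.val hss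
    have h0 := (Prod.ext_iff.1 hEq).1
    have hm := (Prod.ext_iff.1 hEq).2
    have hxy : orb (sK s) = orb (sK s') := orbpt _ _ (horb' s) (horb' s') h0 hm
    funext k
    apply Subtype.ext
    by_contra hne
    refine absurd ?_ (not_le.2 (F.reps_sep _ (s k).2 _ (s' k).2 hne))
    have h1 : ‖(s k : K) - orb (sK s) k‖ ≤ (F.q:ℝ)⁻¹ := by
      rw [← norm_neg, neg_sub]; exact hsh' s k
    have h2 := hsh' s' k
    rw [← hxy] at h2
    have h2' : ‖(s' k : K) - orb (sK s) k‖ ≤ (F.q:ℝ)⁻¹ := by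
      rw [← norm_neg, neg_sub]; exact h2
    exact tri _ _ _ h1 h2'
  -- surjectivity
  have hsurj : Function.Surjective f := by
    rintro ⟨p, hp⟩
    have hall := (mem_attractor_iff F ha0 ha hb p).1 hp
    set x : ℤ → K := fun k => (F.iterZ a b k p).1 with hxdef
    have hxR : ∀ k, ‖x k‖ ≤ 1 := fun k => (hall k).1
    have hsnd : ∀ k : ℤ, (F.iterZ a b k p).2 = x (k-1) := by
      intro k
      have h := iterZ_add_one F b ha0 (k-1) p
      rw [sub_add_cancel] at h
      rw [h]
      rfl
    have hxOrb : IsOrb F a b x := by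
      refine ⟨hxR, fun k => ?_⟩
      have h1 := iterZ_add_one F b ha0 k p
      have h2 : x (k+1) = a * (F.iterZ a b k p).2 + b * (x k ^ F.q - x k) := by
        show (F.iterZ a b (k+1) p).1 = _
        rw [h1]
        rfl
      rw [hsnd k] at h2
      exact h2
    choose t ht1 ht2 using fun k => F.reps_cover (x k) (hxR k)
    set s : ℤ → RT := fun k => ⟨t k, ht1 k⟩ with hsdef
    have hsKs : sK s = t := rfl
    have hclose : ∀ k, ‖orb (sK s) k - x k‖ ≤ (F.q:ℝ)⁻¹ := by
      intro k
      refine tri _ (t k) _ ?_ ?_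
      · rw [hsKs] at *; exact hsh' s k
      · exact ht2 k
    have hxx : orb (sK s) = x := orbit_unique F ha hb (horb' s) hxOrb hclose
    refine ⟨s, ?_⟩
    apply Subtype.ext
    show ((orb (sK s)) 0, (orb (sK s)) (-1)) = p
    rw [hxx]
    have e0 : x 0 = p.1 := by
      rw [hxdef]; simp only []; rw [iterZ_zero]
    have e1 : x (-1) = p.2 := by
      have := hsnd 0
      rw [iterZ_zero] at this
      rw [show (0:ℤ) - 1 = -1 from by ring] at this
      exact this.symm
    rw [e0, e1]
  -- the equivariance property (for f)
  have hequiv : ∀ s : ℤ → RT,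
      ((f fun k => s (k + 1)) : K × K) = F.Tmap a b (f s) := by
    intro s
    set s' : ℤ → RT := fun k => s (k + 1) with hs'def
    set y : ℤ → K := fun k => orb (sK s) (k + 1) with hydef
    have hyOrb : IsOrb F a b y := by
      refine ⟨fun k => (horb' s).1 (k+1), fun k => ?_⟩
      have h := (horb' s).2 (k+1)
      rw [show k+1-1 = k from by ring] at h
      show orb (sK s) (k+1+1) = a * orb (sK s) (k-1+1) + b *
        (orb (sK s) (k+1) ^ F.q - orb (sK s) (k+1))
      rw [show k-1+1 = k from by ring]
      exact h
    have hysh : ∀ k, ‖y k - sK s' k‖ ≤ (F.q:ℝ)⁻¹ := fun k => hsh' s (k+1)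
    have hcl : ∀ k, ‖orb (sK s') k - y k‖ ≤ (F.q:ℝ)⁻¹ :=
      fun k => tri _ (sK s' k) _ (hsh' s' k) (hysh k)
    have hyy : orb (sK s') = y := orbit_unique F ha hb (horb' s') hyOrb hcl
    show ((orb (sK s')) 0, (orb (sK s')) (-1)) = F.Tmap a b ((orb (sK s)) 0, (orb (sK s)) (-1))
    rw [hyy]
    have hrel := (horb' s).2 0
    rw [show (0:ℤ)-1 = -1 from by ring, show (0:ℤ)+1 = 1 from by ring] at hrel
    show (orb (sK s) (0+1), orb (sK s) (-1+1))
        = (a * orb (sK s) (-1) + b * (orb (sK s) 0 ^ F.q - orb (sK s) 0), orb (sK s) 0)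
    rw [show (0:ℤ)+1 = 1 from by ring, show (-1:ℤ)+1 = 0 from by ring, hrel]
  -- continuity
  have hcont : Continuous f := by
    have hg : Continuous (fun s : ℤ → RT => ((orb (sK s)) 0, (orb (sK s)) (-1))) := by
      rw [continuous_iff_continuousAt]
      intro s
      rw [ContinuousAt, Metric.tendsto_nhds]
      intro ε hε
      obtain ⟨N, hN⟩ := exists_pow_lt_of_lt_one hε (inv_lt_one F)
      set M := N + 1 with hMdef
      have hM1 : 1 ≤ M := by omega
      have hMε : ((F.q:ℝ)⁻¹)^M < ε :=
        lt_of_le_of_lt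
          (pow_le_pow_of_le_one (inv_nonneg' F) (inv_lt_one F).le (by omega)) hN
      have hU : {s' : ℤ → RT | ∀ k ∈ Finset.Icc (-(M:ℤ)) (M:ℤ), s' k = s k}
          ∈ nhds s := by
        have hEq : {s' : ℤ → RT | ∀ k ∈ Finset.Icc (-(M:ℤ)) (M:ℤ), s' k = s k} =
            ⋂ k ∈ Finset.Icc (-(M:ℤ)) (M:ℤ), {s' : ℤ → RT | s' k = s k} := by
          ext s'; simp
        rw [hEq]
        refine (Filter.biInter_finset_mem _).2 (fun k _ => ?_)
        have hopen : IsOpen {s' : ℤ → RT | s' k = s k} := by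
          have : {s' : ℤ → RT | s' k = s k} =
              (fun s' : ℤ → RT => s' k) ⁻¹' {s k} := rfl
          rw [this]
          exact (isOpen_discrete _).preimage (continuous_apply k)
        exact hopen.mem_nhds rfl
      filter_upwards [hU] with s' hs'
      have hcl : ∀ k : ℤ, |k| ≤ (M:ℤ) →
          ‖orb (sK s') k - orb (sK s) k‖ ≤ (F.q:ℝ)⁻¹ := by
        intro k hk
        have hk' : k ∈ Finset.Icc (-(M:ℤ)) (M:ℤ) := by
          rw [Finset.mem_Icc]; rw [abs_le] at hk; omega
        have hkk : sK s' k = sK s k := by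
          show ((s' k : K)) = (s k : K)
          rw [hs' k hk']
        refine tri _ (sK s k) _ ?_ (hsh' s k)
        rw [← hkk]
        exact hsh' s' k
      have hw := orbit_window F ha hb (horb' s') (horb' s) M hcl
      have hle : (M - 1 : ℕ) ≤ M := by omega
      have hexp : (M - 1) + 1 = M := by omega
      have h0 := hw (M-1) hle 0 (by rw [abs_le]; omega)
      have h1 := hw (M-1) hle (-1) (by rw [abs_le]; omega)
      rw [hexp] at h0 h1
      rw [Prod.dist_eq]
      apply max_lt
      · rw [dist_eq_norm]; exact lt_of_le_of_lt h0 hMε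
      · rw [dist_eq_norm]; exact lt_of_le_of_lt h1 hMε
    exact hg.subtype_mk _
  -- assemble the homeomorphism
  haveI : Finite RT := by
    rw [hRT]; infer_instance
  let e : (ℤ → RT) ≃ {p : K × K // p ∈ F.Attractor a b} :=
    Equiv.ofBijective f ⟨hinj, hsurj⟩
  have hconte : Continuous e := hcont
  refine ⟨Continuous.homeoOfEquivCompactToT2 (f := e) hconte, ?_⟩
  intro s
  exact hequiv s
end
end
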